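/- arXiv:1910.02317 — 8 statements merged into one kernel-verified Lean document; each statement's English description precedes it below -/
import Mathlib

section
/- Let Q be a positive definite real n×n matrix, let α > 0, and let A₀ be a real n×n matrix such that the matrix A₀ Q + Q A₀ᵀ + 2α Q is negative semidefinite. Let ε : ℝ → (Fin n → ℝ) be differentiable with ε'(t) = A₀ ε(t) for all t. Then for all t ≥ 0, ε(t)ᵀ Q⁻¹ ε(t) ≤ e^{−2αt} · ε(0)ᵀ Q⁻¹ ε(0); equivalently, ‖ε(t)‖_q ≤ e^{−αt} ‖ε(0)‖_q. -/
open Matrix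

/-- The vector norm `‖x‖_q = √(xᵀ Q⁻¹ x)` associated to a positive definite matrix `Q`. -/
noncomputable def quadNorm {n : ℕ} (Q : Matrix (Fin n) (Fin n) ℝ) (x : Fin n → ℝ) : ℝ :=
  Real.sqrt (x ⬝ᵥ Q⁻¹.mulVec x)

lemma sqrt_exp' (x : ℝ) : Real.sqrt (Real.exp x) = Real.exp (x / 2) := by
  have h : Real.exp x = (Real.exp (x / 2)) ^ 2 := by
    rw [sq, ← Real.exp_add]; ring_nf
  rw [h, Real.sqrt_sq (Real.exp_nonneg _)]

/-- if `A₀ Q + Q A₀ᵀ + 2αQ ⪯ 0` and `ε' = A₀ ε`, then the quadratic Lyapunov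
function decays as `V_q(ε(t)) ≤ e^{-2αt} V_q(ε(0))`, equivalently
`‖ε(t)‖_q ≤ e^{-αt} ‖ε(0)‖_q`, for all `t ≥ 0`. -/
theorem lyapunov_decay (n : ℕ)
    (Q : Matrix (Fin n) (Fin n) ℝ) (hQ : Q.PosDef)
    (α : ℝ) (hα : 0 < α)
    (A₀ : Matrix (Fin n) (Fin n) ℝ)
    (hLMI : (-(A₀ * Q + Q * A₀ᵀ + (2 * α) • Q)).PosSemidef)
    (ε : ℝ → (Fin n → ℝ))
    (hε : ∀ t : ℝ, HasDerivAt ε (A₀.mulVec (ε t)) t) :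
    ∀ t : ℝ, 0 ≤ t →
      (ε t ⬝ᵥ Q⁻¹.mulVec (ε t) ≤ Real.exp (-(2 * α) * t) * (ε 0 ⬝ᵥ Q⁻¹.mulVec (ε 0))) ∧
      quadNorm Q (ε t) ≤ Real.exp (-α * t) * quadNorm Q (ε 0) := by
  set P := Q⁻¹ with hP
  have hPpd : P.PosDef := hQ.inv
  have hdet : IsUnit Q.det := (Matrix.isUnit_iff_isUnit_det Q).1 hQ.isUnit
  have hQP : Q * P = 1 := Matrix.mul_nonsing_inv Q hdet
  have hPQ : P * Q = 1 := Matrix.nonsing_inv_mul Q hdet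
  -- conjugate the LMI by P
  have hM : (-(P * A₀ + A₀ᵀ * P + (2 * α) • P)).PosSemidef := by
    have hconj := hLMI.mul_mul_conjTranspose_same P
    rw [hPpd.isHermitian.eq] at hconj
    have key : P * (-(A₀ * Q + Q * A₀ᵀ + (2 * α) • Q)) * P
        = -(P * A₀ + A₀ᵀ * P + (2 * α) • P) := by
      have e1 : P * (A₀ * Q) * P = P * A₀ := by
        rw [Matrix.mul_assoc P (A₀ * Q) P, Matrix.mul_assoc A₀ Q P, hQP, Matrix.mul_one]
      have e2 : P * (Q * A₀ᵀ) * P = A₀ᵀ * P := by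
        rw [← Matrix.mul_assoc P Q A₀ᵀ, hPQ, Matrix.one_mul]
      have e3 : P * ((2 * α) • Q) * P = (2 * α) • P := by
        rw [Matrix.mul_smul, Matrix.smul_mul, Matrix.mul_assoc, hQP, Matrix.mul_one]
      rw [Matrix.mul_neg, Matrix.neg_mul, Matrix.mul_add, Matrix.mul_add,
        Matrix.add_mul, Matrix.add_mul, e1, e2, e3]
    rwa [key] at hconj
  -- the quadratic form inequality
  have hform : ∀ x : Fin n → ℝ,
      A₀.mulVec x ⬝ᵥ P.mulVec x + x ⬝ᵥ P.mulVec (A₀.mulVec x)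
        + 2 * α * (x ⬝ᵥ P.mulVec x) ≤ 0 := by
    intro x
    have h0 := hM.dotProduct_mulVec_nonneg x
    simp only [star_trivial, Matrix.neg_mulVec, Matrix.add_mulVec, dotProduct_neg,
      dotProduct_add, Matrix.smul_mulVec, dotProduct_smul, smul_eq_mul] at h0
    have ha : x ⬝ᵥ (P * A₀).mulVec x = x ⬝ᵥ P.mulVec (A₀.mulVec x) := by
      rw [← Matrix.mulVec_mulVec]
    have hb : x ⬝ᵥ (A₀ᵀ * P).mulVec x = A₀.mulVec x ⬝ᵥ P.mulVec x := by
      rw [← Matrix.mulVec_mulVec, Matrix.dotProduct_mulVec, Matrix.vecMul_transpose]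
    rw [ha, hb] at h0
    linarith
  -- derivative of the Lyapunov function
  have hV : ∀ t : ℝ, HasDerivAt (fun s => ε s ⬝ᵥ P.mulVec (ε s))
      (A₀.mulVec (ε t) ⬝ᵥ P.mulVec (ε t) + ε t ⬝ᵥ P.mulVec (A₀.mulVec (ε t))) t := by
    intro t
    have hcomp : ∀ i, HasDerivAt (fun s => ε s i) (A₀.mulVec (ε t) i) t :=
      fun i => hasDerivAt_pi.1 (hε t) i
    have h1 : ∀ i, HasDerivAt (fun s => ε s i * P.mulVec (ε s) i)
        (A₀.mulVec (ε t) i * P.mulVec (ε t) i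
          + ε t i * P.mulVec (A₀.mulVec (ε t)) i) t := by
      intro i
      have hinner : HasDerivAt (fun s => P.mulVec (ε s) i)
          (P.mulVec (A₀.mulVec (ε t)) i) t := by
        simp only [Matrix.mulVec, dotProduct]
        exact HasDerivAt.fun_sum fun j _ => (hcomp j).const_mul (P i j)
      exact (hcomp i).mul hinner
    have hsum := HasDerivAt.fun_sum (fun i (_ : i ∈ Finset.univ) => h1 i)
    exact hsum.congr_deriv (by simp [dotProduct, Finset.sum_add_distrib])
  -- the auxiliary function g(t) = e^{2αt} V(t) is antitone
  set g : ℝ → ℝ := fun s => Real.exp (2 * α * s) * (ε s ⬝ᵥ P.mulVec (ε s)) with hg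
  have hgd : ∀ t : ℝ, HasDerivAt g
      (Real.exp (2 * α * t) * (2 * α) * (ε t ⬝ᵥ P.mulVec (ε t))
        + Real.exp (2 * α * t)
          * (A₀.mulVec (ε t) ⬝ᵥ P.mulVec (ε t) + ε t ⬝ᵥ P.mulVec (A₀.mulVec (ε t)))) t := by
    intro t
    have hexp : HasDerivAt (fun s : ℝ => Real.exp (2 * α * s))
        (Real.exp (2 * α * t) * (2 * α)) t := by
      have := ((hasDerivAt_id t).const_mul (2 * α)).exp
      simpa using this
    exact hexp.mul (hV t)
  have hganti : Antitone g := by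
    apply antitone_of_deriv_nonpos
    · exact fun t => (hgd t).differentiableAt
    · intro t
      rw [(hgd t).deriv]
      have hb := hform (ε t)
      have he : (0:ℝ) < Real.exp (2 * α * t) := Real.exp_pos _
      nlinarith [he.le]
  intro t ht
  have hVineq : ε t ⬝ᵥ P.mulVec (ε t)
      ≤ Real.exp (-(2 * α) * t) * (ε 0 ⬝ᵥ P.mulVec (ε 0)) := by
    have h1 : g t ≤ g 0 := hganti ht
    rw [hg] at h1
    simp only [mul_zero, Real.exp_zero, one_mul] at h1
    have h2 : ε t ⬝ᵥ P.mulVec (ε t)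
        = Real.exp (-(2 * α) * t) * (Real.exp (2 * α * t) * (ε t ⬝ᵥ P.mulVec (ε t))) := by
      rw [← mul_assoc, ← Real.exp_add]
      ring_nf
      rw [Real.exp_zero, one_mul]
    rw [h2]
    exact mul_le_mul_of_nonneg_left h1 (Real.exp_nonneg _)
  refine ⟨hVineq, ?_⟩
  unfold quadNorm
  calc Real.sqrt (ε t ⬝ᵥ P.mulVec (ε t))
      ≤ Real.sqrt (Real.exp (-(2 * α) * t) * (ε 0 ⬝ᵥ P.mulVec (ε 0))) :=
        Real.sqrt_le_sqrt hVineq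
    _ = Real.sqrt (Real.exp (-(2 * α) * t)) * Real.sqrt (ε 0 ⬝ᵥ P.mulVec (ε 0)) :=
        Real.sqrt_mul (Real.exp_nonneg _) _
    _ = Real.exp (-α * t) * Real.sqrt (ε 0 ⬝ᵥ P.mulVec (ε 0)) := by
        rw [sqrt_exp']
        congr 1
        ring_nf
end

section
/- Let Q be a positive definite real n×n matrix, let α > 0, and let A₀ be a real n×n matrix with A₀ Q + Q A₀ᵀ + 2α Q negative semidefinite. Then for every t ≥ 0 and every vector v ∈ Fin n → ℝ, (exp(t A₀) v)ᵀ Q⁻¹ (exp(t A₀) v) ≤ e^{−2αt} · vᵀ Q⁻¹ v, where exp denotes the matrix exponential. -/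
open Matrix

attribute [local instance] Matrix.linftyOpNormedAddCommGroup Matrix.linftyOpNormedRing
  Matrix.linftyOpNormedAlgebra

/-- `M ↦ M *ᵥ v` as a continuous linear map. -/
noncomputable def lyapMulVecCLM {n : ℕ} (v : Fin n → ℝ) :
    Matrix (Fin n) (Fin n) ℝ →L[ℝ] (Fin n → ℝ) :=
  LinearMap.toContinuousLinearMap
    { toFun := fun M => M.mulVec v
      map_add' := fun M N => Matrix.add_mulVec M N v
      map_smul' := fun c M => by simp [Matrix.smul_mulVec] }

@[simp] lemma lyapMulVecCLM_apply {n : ℕ} (v : Fin n → ℝ) (M : Matrix (Fin n) (Fin n) ℝ) :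
    lyapMulVecCLM v M = M.mulVec v := rfl

/-- `(u, w) ↦ u ⬝ᵥ P *ᵥ w` as a continuous bilinear map. -/
noncomputable def lyapQuadCLM {n : ℕ} (P : Matrix (Fin n) (Fin n) ℝ) :
    (Fin n → ℝ) →L[ℝ] (Fin n → ℝ) →L[ℝ] ℝ :=
  LinearMap.toContinuousLinearMap
    { toFun := fun u => LinearMap.toContinuousLinearMap
        { toFun := fun w => u ⬝ᵥ P.mulVec w
          map_add' := fun w₁ w₂ => by simp [Matrix.mulVec_add, dotProduct_add]
          map_smul' := fun c w => by
            simp [Matrix.mulVec_smul, dotProduct_smul, smul_eq_mul] }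
      map_add' := fun u₁ u₂ => by ext w; simp [add_dotProduct]
      map_smul' := fun c u => by ext w; simp [smul_dotProduct, smul_eq_mul] }

@[simp] lemma lyapQuadCLM_apply {n : ℕ} (P : Matrix (Fin n) (Fin n) ℝ)
    (u w : Fin n → ℝ) : lyapQuadCLM P u w = u ⬝ᵥ P.mulVec w := rfl

/-- if `A₀ Q + Q A₀ᵀ + 2αQ ⪯ 0`, then for every `t ≥ 0` and every vector `v`,
`(e^{tA₀} v)ᵀ Q⁻¹ (e^{tA₀} v) ≤ e^{-2αt} vᵀ Q⁻¹ v`. -/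
theorem matrixExp_lyapunov_decay (n : ℕ)
    (Q : Matrix (Fin n) (Fin n) ℝ) (hQ : Q.PosDef)
    (α : ℝ) (hα : 0 < α)
    (A₀ : Matrix (Fin n) (Fin n) ℝ)
    (hLMI : (-(A₀ * Q + Q * A₀ᵀ + (2 * α) • Q)).PosSemidef) :
    ∀ t : ℝ, 0 ≤ t → ∀ v : Fin n → ℝ,
      (NormedSpace.exp (t • A₀)).mulVec v ⬝ᵥ Q⁻¹.mulVec ((NormedSpace.exp (t • A₀)).mulVec v)
        ≤ Real.exp (-(2 * α) * t) * (v ⬝ᵥ Q⁻¹.mulVec v) := by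
  intro t ht v
  set P : Matrix (Fin n) (Fin n) ℝ := Q⁻¹ with hPdef
  have hdet : IsUnit Q.det := isUnit_iff_ne_zero.2 hQ.det_pos.ne'
  have hQP : Q * P = 1 := Matrix.mul_nonsing_inv Q hdet
  have hPQ : P * Q = 1 := Matrix.nonsing_inv_mul Q hdet
  have hPH : P.IsHermitian := hQ.isHermitian.inv
  -- transfer the LMI through Q⁻¹ on both sides
  have h1 : P * (A₀ * Q) * P = P * A₀ := by
    rw [← Matrix.mul_assoc P A₀ Q, Matrix.mul_assoc (P * A₀) Q P, hQP, Matrix.mul_one]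
  have h2 : P * (Q * A₀ᵀ) * P = A₀ᵀ * P := by
    rw [← Matrix.mul_assoc P Q A₀ᵀ, hPQ, Matrix.one_mul]
  have h3 : P * ((2 * α) • Q) * P = (2 * α) • P := by
    simp [Matrix.mul_smul, Matrix.smul_mul, hPQ]
  have key : P * (-(A₀ * Q + Q * A₀ᵀ + (2 * α) • Q)) * Pᴴ
      = -(P * A₀ + A₀ᵀ * P + (2 * α) • P) := by
    rw [hPH.eq]
    simp only [Matrix.mul_neg, Matrix.neg_mul, Matrix.mul_add, Matrix.add_mul, neg_inj]
    rw [h1, h2, h3]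
  have hN : (-(P * A₀ + A₀ᵀ * P + (2 * α) • P)).PosSemidef := by
    rw [← key]; exact hLMI.mul_mul_conjTranspose_same P
  -- the pointwise quadratic inequality
  have quad : ∀ u : Fin n → ℝ,
      A₀.mulVec u ⬝ᵥ P.mulVec u + u ⬝ᵥ P.mulVec (A₀.mulVec u)
        ≤ -(2 * α) * (u ⬝ᵥ P.mulVec u) := by
    intro u
    have h := hN.dotProduct_mulVec_nonneg u
    have hstar : star u = u := by simp
    rw [hstar] at h
    have e1 : A₀.mulVec u ⬝ᵥ P.mulVec u = u ⬝ᵥ (A₀ᵀ * P).mulVec u := by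
      rw [← Matrix.mulVec_mulVec, dotProduct_comm,
        Matrix.dotProduct_mulVec, ← Matrix.mulVec_transpose, dotProduct_comm]
    have e2 : u ⬝ᵥ P.mulVec (A₀.mulVec u) = u ⬝ᵥ (P * A₀).mulVec u := by
      rw [← Matrix.mulVec_mulVec]
    rw [e1, e2]
    rw [Matrix.neg_mulVec, dotProduct_neg, Matrix.add_mulVec, Matrix.add_mulVec,
      dotProduct_add, dotProduct_add, Matrix.smul_mulVec, dotProduct_smul] at h
    have := neg_nonneg.mp (by linarith [h] :
      (0:ℝ) ≤ -(u ⬝ᵥ (P * A₀).mulVec u + u ⬝ᵥ (A₀ᵀ * P).mulVec u + (2 * α) • (u ⬝ᵥ P.mulVec u)))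
    simp only [smul_eq_mul] at this
    linarith
  -- the trajectory and the Lyapunov function
  set x : ℝ → (Fin n → ℝ) := fun s => (NormedSpace.exp (s • A₀)).mulVec v with hxdef
  set f : ℝ → ℝ := fun s => x s ⬝ᵥ P.mulVec (x s) with hfdef
  have hxder : ∀ s : ℝ, HasDerivAt x (A₀.mulVec (x s)) s := by
    intro s
    have hE : HasDerivAt (fun u : ℝ => NormedSpace.exp (u • A₀))
        (A₀ * NormedSpace.exp (s • A₀)) s := hasDerivAt_exp_smul_const' A₀ s
    have := ((lyapMulVecCLM v).hasFDerivAt.comp_hasDerivAt s hE)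
    simp only [Function.comp_def, lyapMulVecCLM_apply, ← Matrix.mulVec_mulVec] at this
    exact this.congr_deriv ((lyapMulVecCLM_apply _ _).trans (Matrix.mulVec_mulVec _ _ _).symm)
  have hfder : ∀ s : ℝ, HasDerivAt f
      (A₀.mulVec (x s) ⬝ᵥ P.mulVec (x s) + x s ⬝ᵥ P.mulVec (A₀.mulVec (x s))) s := by
    intro s
    have hc : HasDerivAt (fun s => lyapQuadCLM P (x s)) (lyapQuadCLM P (A₀.mulVec (x s))) s :=
      (lyapQuadCLM P).hasFDerivAt.comp_hasDerivAt s (hxder s)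
    have := hc.clm_apply (hxder s)
    simpa [hfdef] using this
  -- the rescaled function is antitone
  set g : ℝ → ℝ := fun s => Real.exp ((2 * α) * s) * f s with hgdef
  have hgder : ∀ s : ℝ, HasDerivAt g
      (Real.exp ((2 * α) * s) * (2 * α) * f s +
        Real.exp ((2 * α) * s) *
          (A₀.mulVec (x s) ⬝ᵥ P.mulVec (x s) + x s ⬝ᵥ P.mulVec (A₀.mulVec (x s)))) s := by
    intro s
    have h1 : HasDerivAt (fun s : ℝ => (2 * α) * s) (2 * α) s := by
      simpa using (hasDerivAt_id s).const_mul (2 * α)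
    exact (h1.exp).mul (hfder s)
  have hganti : Antitone g := by
    apply antitone_of_deriv_nonpos
    · exact fun s => (hgder s).differentiableAt
    · intro s
      rw [(hgder s).deriv]
      have hq := quad (x s)
      have hexp := (Real.exp_pos ((2 * α) * s)).le
      nlinarith [Real.exp_pos ((2 * α) * s), quad (x s)]
  have hg0 : g 0 = v ⬝ᵥ P.mulVec v := by
    simp [hgdef, hfdef, hxdef, NormedSpace.exp_zero, Matrix.one_mulVec]
  have hgt : Real.exp ((2 * α) * t) * f t ≤ v ⬝ᵥ P.mulVec v := by
    have := hganti ht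
    rwa [hg0] at this
  have hfin := mul_le_mul_of_nonneg_left hgt (Real.exp_pos (-(2 * α) * t)).le
  rw [← mul_assoc, ← Real.exp_add] at hfin
  simp only [neg_mul, neg_add_cancel, Real.exp_zero, one_mul] at hfin
  simpa [hfdef, hxdef] using hfin
end

section
/- Let Q be a positive definite real n×n matrix, α > 0, and A₀ a real n×n matrix with A₀ Q + Q A₀ᵀ + 2α Q negative semidefinite. Let x, x̂ : ℝ → (Fin n → ℝ) be differentiable functions such that the error ε(t) = x(t) − x̂(t) satisfies ε'(t) = A₀ ε(t) for all t. Let v_1, …, v_N : ℝ → (Fin n → ℝ) and suppose that for every t ≥ 0, x̂(t) lies in the convex hull of {v_1(t), …, v_N(t)}. Then for every t ≥ 0 there exists an index i ∈ {1, …, N} such that ‖x(t)‖_q ≤ ‖v_i(t)‖_q + e^{−αt} ‖x(0) − x̂(0)‖_q. -/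
open Matrix

section quadNormAux

variable {n : ℕ}

open scoped MatrixOrder

lemma quadNorm_eq_norm {Q : Matrix (Fin n) (Fin n) ℝ} (hQ : Q.PosDef) (z : Fin n → ℝ) :
    quadNorm Q z =
      ‖(WithLp.equiv 2 (Fin n → ℝ)).symm ((CFC.sqrt Q⁻¹).mulVec z)‖ := by
  have hSym : CFC.sqrt Q⁻¹ = (CFC.sqrt Q⁻¹)ᵀ := by
    rw [← conjTranspose_eq_transpose_of_trivial, (CFC.sqrt_nonneg Q⁻¹).posSemidef.isHermitian.eq]
  have h1 : z ⬝ᵥ Q⁻¹.mulVec z =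
      ((CFC.sqrt Q⁻¹).mulVec z) ⬝ᵥ ((CFC.sqrt Q⁻¹).mulVec z) := by
    conv_lhs => rw [← CFC.sqrt_mul_sqrt_self Q⁻¹ hQ.inv.posSemidef.nonneg, ← mulVec_mulVec, dotProduct_mulVec,
      hSym, vecMul_transpose]
    rw [← hSym]
  rw [quadNorm, h1, EuclideanSpace.norm_eq]
  congr 1
  simp [dotProduct, Real.norm_eq_abs, sq_abs, pow_two]

lemma quadNorm_add_le {Q : Matrix (Fin n) (Fin n) ℝ} (hQ : Q.PosDef) (a b : Fin n → ℝ) :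
    quadNorm Q (a + b) ≤ quadNorm Q a + quadNorm Q b := by
  simp only [quadNorm_eq_norm hQ, mulVec_add, WithLp.equiv_symm_apply, WithLp.toLp_add]
  exact norm_add_le _ _

lemma quadNorm_smul {Q : Matrix (Fin n) (Fin n) ℝ} (hQ : Q.PosDef) {c : ℝ} (hc : 0 ≤ c)
    (z : Fin n → ℝ) : quadNorm Q (c • z) = c * quadNorm Q z := by
  simp only [quadNorm_eq_norm hQ, mulVec_smul, WithLp.equiv_symm_apply, WithLp.toLp_smul, norm_smul,
    Real.norm_eq_abs, abs_of_nonneg hc]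

lemma hasDerivAt_quadForm {M : Matrix (Fin n) (Fin n) ℝ} {f : ℝ → Fin n → ℝ} {f' : Fin n → ℝ}
    {t : ℝ} (hf : HasDerivAt f f' t) :
    HasDerivAt (fun s => f s ⬝ᵥ M.mulVec (f s))
      (f' ⬝ᵥ M.mulVec (f t) + f t ⬝ᵥ M.mulVec f') t := by
  have hfi : ∀ j, HasDerivAt (fun s => f s j) (f' j) t := fun j =>
    (ContinuousLinearMap.proj (R := ℝ) (φ := fun _ : Fin n => ℝ) j).hasFDerivAt.comp_hasDerivAt t hf
  have h : HasDerivAt (fun s => ∑ j, ∑ k, f s j * (M j k * f s k))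
      (∑ j, ∑ k, (f' j * (M j k * f t k) + f t j * (M j k * f' k))) t := by
    refine HasDerivAt.fun_sum fun j _ => HasDerivAt.fun_sum fun k _ => ?_
    exact (hfi j).mul ((hfi k).const_mul (M j k))
  convert h using 1
  · funext s
    simp [dotProduct, mulVec, Finset.mul_sum]
  · simp [dotProduct, mulVec, Finset.mul_sum, Finset.sum_add_distrib]

end quadNormAux

/-- Theorem 1: if the estimation error `ε = x - x̂` obeys `ε' = A₀ ε` with
`A₀ Q + Q A₀ᵀ + 2αQ ⪯ 0`, and the estimate `x̂(t)` lies in the convex hull of the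
vertices `v_i(t)`, then for every `t ≥ 0` there is a vertex `i` with
`‖x(t)‖_q ≤ ‖v_i(t)‖_q + e^{-αt} ‖x(0) - x̂(0)‖_q`. -/
theorem barrier_bound_quad (n N : ℕ) (hN : 0 < N)
    (Q : Matrix (Fin n) (Fin n) ℝ) (hQ : Q.PosDef)
    (α : ℝ) (hα : 0 < α)
    (A₀ : Matrix (Fin n) (Fin n) ℝ)
    (hLMI : (-(A₀ * Q + Q * A₀ᵀ + (2 * α) • Q)).PosSemidef)
    (x xhat : ℝ → (Fin n → ℝ))
    (hx : Differentiable ℝ x) (hxhat : Differentiable ℝ xhat)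
    (hε : ∀ t : ℝ, HasDerivAt (fun s => x s - xhat s) (A₀.mulVec (x t - xhat t)) t)
    (v : Fin N → ℝ → (Fin n → ℝ))
    (hhull : ∀ t : ℝ, 0 ≤ t → xhat t ∈ convexHull ℝ (Set.range fun i => v i t)) :
    ∀ t : ℝ, 0 ≤ t → ∃ i : Fin N,
      quadNorm Q (x t) ≤ quadNorm Q (v i t) + Real.exp (-α * t) * quadNorm Q (x 0 - xhat 0) := by
  -- conjugated LMI
  have hdet : IsUnit Q.det := isUnit_iff_ne_zero.mpr hQ.det_pos.ne'
  have hQM : Q * Q⁻¹ = 1 := Matrix.mul_nonsing_inv Q hdet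
  have hMQ : Q⁻¹ * Q = 1 := Matrix.nonsing_inv_mul Q hdet
  have hMH : Q⁻¹ᴴ = Q⁻¹ := hQ.inv.isHermitian
  have hK : (-(Q⁻¹ * A₀ + A₀ᵀ * Q⁻¹ + (2 * α) • Q⁻¹)).PosSemidef := by
    have h := hLMI.mul_mul_conjTranspose_same Q⁻¹
    rw [hMH] at h
    convert h using 1
    have e1 : Q⁻¹ * (A₀ * Q) * Q⁻¹ = Q⁻¹ * A₀ := by
      rw [Matrix.mul_assoc, Matrix.mul_assoc, hQM, Matrix.mul_one]
    have e2 : Q⁻¹ * (Q * A₀ᵀ) * Q⁻¹ = A₀ᵀ * Q⁻¹ := by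
      rw [← Matrix.mul_assoc, hMQ, Matrix.one_mul]
    have e3 : Q⁻¹ * ((2 * α) • Q) * Q⁻¹ = (2 * α) • Q⁻¹ := by
      rw [Matrix.mul_smul, Matrix.smul_mul, hMQ, Matrix.one_mul]
    rw [Matrix.mul_neg, Matrix.neg_mul, Matrix.mul_add, Matrix.mul_add,
      Matrix.add_mul, Matrix.add_mul, e1, e2, e3]
  -- pointwise dissipation inequality
  have hkey : ∀ z : Fin n → ℝ,
      (A₀ *ᵥ z) ⬝ᵥ Q⁻¹ *ᵥ z + z ⬝ᵥ Q⁻¹ *ᵥ (A₀ *ᵥ z) + 2 * α * (z ⬝ᵥ Q⁻¹ *ᵥ z) ≤ 0 := by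
    intro z
    have h0 := hK.dotProduct_mulVec_nonneg z
    simp only [star_trivial, Matrix.neg_mulVec, Matrix.add_mulVec, dotProduct_neg,
      dotProduct_add, Matrix.smul_mulVec, dotProduct_smul, ← Matrix.mulVec_mulVec,
      smul_eq_mul] at h0
    have h1 : z ⬝ᵥ A₀ᵀ *ᵥ Q⁻¹ *ᵥ z = (A₀ *ᵥ z) ⬝ᵥ Q⁻¹ *ᵥ z := by
      rw [dotProduct_mulVec, vecMul_transpose]
    linarith [h1.symm ▸ h0]
  -- the Lyapunov function along the error and its exponential rescaling
  set V : ℝ → ℝ := fun s => (x s - xhat s) ⬝ᵥ Q⁻¹ *ᵥ (x s - xhat s) with hVdef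
  set g : ℝ → ℝ := fun s => Real.exp (2 * α * s) * V s with hgdef
  have hg : ∀ s : ℝ, HasDerivAt g
      (Real.exp (2 * α * s) * (2 * α * 1) * V s +
        Real.exp (2 * α * s) *
          ((A₀ *ᵥ (x s - xhat s)) ⬝ᵥ Q⁻¹ *ᵥ (x s - xhat s) +
            (x s - xhat s) ⬝ᵥ Q⁻¹ *ᵥ (A₀ *ᵥ (x s - xhat s)))) s := by
    intro s
    exact (((hasDerivAt_id s).const_mul (2 * α)).exp).mul (hasDerivAt_quadForm (hε s))
  have hanti : Antitone g := by
    refine antitone_of_deriv_nonpos (fun s => (hg s).differentiableAt) (fun s => ?_)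
    rw [(hg s).deriv]
    have h1 := hkey (x s - xhat s)
    have h2 := (Real.exp_pos (2 * α * s)).le
    nlinarith [h1, h2]
  intro t ht
  -- decay of the error in the quadratic norm
  have hVnonneg : ∀ s : ℝ, 0 ≤ V s := fun s => by
    show 0 ≤ (x s - xhat s) ⬝ᵥ Q⁻¹ *ᵥ (x s - xhat s)
    simpa only [star_trivial] using hQ.inv.posSemidef.dotProduct_mulVec_nonneg (x s - xhat s)
  have hgt : g t ≤ g 0 := hanti ht
  have hVt : V t ≤ Real.exp (-α * t) ^ 2 * V 0 := by
    have hsq : Real.exp (-α * t) ^ 2 = Real.exp (-(2 * α * t)) := by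
      rw [sq, ← Real.exp_add]; ring_nf
    rw [hsq]
    have h0 : Real.exp (2 * α * t) * V t ≤ V 0 := by
      simpa [hgdef] using hgt
    have hepos := Real.exp_pos (2 * α * t)
    rw [Real.exp_neg]
    rw [← mul_le_mul_iff_right₀ hepos, ← mul_assoc, mul_inv_cancel₀ hepos.ne', one_mul]
    exact h0
  have hdecay : quadNorm Q (x t - xhat t) ≤ Real.exp (-α * t) * quadNorm Q (x 0 - xhat 0) := by
    have : quadNorm Q (x t - xhat t) ≤ Real.sqrt (Real.exp (-α * t) ^ 2 * V 0) :=
      Real.sqrt_le_sqrt hVt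
    rwa [Real.sqrt_mul (sq_nonneg _), Real.sqrt_sq (Real.exp_nonneg _)] at this
  -- pick the maximizing vertex
  obtain ⟨i, -, hi⟩ := Finset.exists_max_image Finset.univ (fun i => quadNorm Q (v i t))
    ⟨⟨0, hN⟩, Finset.mem_univ _⟩
  refine ⟨i, ?_⟩
  -- the estimate is bounded by the vertex value
  have hCconv : Convex ℝ {z : Fin n → ℝ | quadNorm Q z ≤ quadNorm Q (v i t)} := by
    intro u hu w hw a b ha hb hab
    have h1 : quadNorm Q (a • u + b • w) ≤ a * quadNorm Q u + b * quadNorm Q w := by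
      calc quadNorm Q (a • u + b • w) ≤ quadNorm Q (a • u) + quadNorm Q (b • w) :=
            quadNorm_add_le hQ _ _
        _ = a * quadNorm Q u + b * quadNorm Q w := by
            rw [quadNorm_smul hQ ha, quadNorm_smul hQ hb]
    have := add_le_add (mul_le_mul_of_nonneg_left hu ha) (mul_le_mul_of_nonneg_left hw hb)
    calc quadNorm Q (a • u + b • w) ≤ a * quadNorm Q u + b * quadNorm Q w := h1
      _ ≤ a * quadNorm Q (v i t) + b * quadNorm Q (v i t) := this
      _ = quadNorm Q (v i t) := by rw [← add_mul, hab, one_mul]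
  have hxhat_le : quadNorm Q (xhat t) ≤ quadNorm Q (v i t) := by
    have hsub : convexHull ℝ (Set.range fun j => v j t) ⊆
        {z : Fin n → ℝ | quadNorm Q z ≤ quadNorm Q (v i t)} := by
      apply convexHull_min _ hCconv
      rintro z ⟨j, rfl⟩
      exact hi j (Finset.mem_univ _)
    exact hsub (hhull t ht)
  -- triangle inequality
  have htri : quadNorm Q (x t) ≤ quadNorm Q (xhat t) + quadNorm Q (x t - xhat t) := by
    have hxt : x t = xhat t + (x t - xhat t) := by ring
    calc quadNorm Q (x t) = quadNorm Q (xhat t + (x t - xhat t)) := by rw [← hxt]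
      _ ≤ quadNorm Q (xhat t) + quadNorm Q (x t - xhat t) := quadNorm_add_le hQ _ _
  calc quadNorm Q (x t) ≤ quadNorm Q (xhat t) + quadNorm Q (x t - xhat t) := htri
    _ ≤ quadNorm Q (v i t) + Real.exp (-α * t) * quadNorm Q (x 0 - xhat 0) :=
        add_le_add hxhat_le hdecay
end

section
/- Let Q_1, …, Q_m be positive definite real n×n matrices and let V_c(x) = min over γ in the standard simplex of xᵀ (∑_j γ_j Q_j)⁻¹ x be the composite quadratic Lyapunov function. Then the unit sublevel set {x : V_c(x) ≤ 1} equals the convex hull of the union of the ellipsoids {x : xᵀ Q_j⁻¹ x ≤ 1} for j = 1, …, m. -/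
open Matrix

noncomputable def compQuad {m n : ℕ} (Q : Fin m → Matrix (Fin n) (Fin n) ℝ)
    (x : Fin n → ℝ) : ℝ :=
  sInf ((fun γ : Fin m → ℝ => x ⬝ᵥ ((∑ j, γ j • Q j)⁻¹).mulVec x) '' stdSimplex ℝ (Fin m))

section Aux

variable {m n : ℕ}

private lemma sum_mulVec' (A : Fin m → Matrix (Fin n) (Fin n) ℝ) (v : Fin n → ℝ) :
    (∑ i, A i) *ᵥ v = ∑ i, A i *ᵥ v := by
  ext x
  simp [Matrix.mulVec, dotProduct, Finset.sum_apply, Matrix.sum_apply, Finset.sum_mul]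
  rw [Finset.sum_comm]

private lemma dot_sum' (v : Fin n → ℝ) (u : Fin m → (Fin n → ℝ)) :
    v ⬝ᵥ (∑ i, u i) = ∑ i, v ⬝ᵥ u i := by
  simp [dotProduct, Finset.mul_sum, Finset.sum_apply]
  rw [Finset.sum_comm]

private lemma quad_expand (Q : Fin m → Matrix (Fin n) (Fin n) ℝ) (γ : Fin m → ℝ)
    (v : Fin n → ℝ) : v ⬝ᵥ (∑ j, γ j • Q j) *ᵥ v = ∑ j, γ j * (v ⬝ᵥ Q j *ᵥ v) := by
  rw [sum_mulVec', dot_sum']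
  refine Finset.sum_congr rfl fun j _ => ?_
  rw [Matrix.smul_mulVec, dotProduct_smul, smul_eq_mul]

private lemma posDef_sum (Q : Fin m → Matrix (Fin n) (Fin n) ℝ) (hQ : ∀ j, (Q j).PosDef)
    {γ : Fin m → ℝ} (hγ : γ ∈ stdSimplex ℝ (Fin m)) : (∑ j, γ j • Q j).PosDef := by
  obtain ⟨hγ0, hγ1⟩ := hγ
  rw [Matrix.posDef_iff_dotProduct_mulVec]
  constructor
  · show (∑ j, γ j • Q j)ᴴ = ∑ j, γ j • Q j
    rw [Matrix.conjTranspose_sum]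
    refine Finset.sum_congr rfl fun j _ => ?_
    rw [Matrix.conjTranspose_smul, (hQ j).1.eq]
    simp
  · intro x hx
    have hrw : star x ⬝ᵥ (∑ j, γ j • Q j) *ᵥ x = ∑ j, γ j * (x ⬝ᵥ Q j *ᵥ x) := by
      show x ⬝ᵥ _ = _
      exact quad_expand Q γ x
    rw [hrw]
    have hex : ∃ j ∈ Finset.univ, 0 < γ j := by
      by_contra h
      push_neg at h
      have : ∑ j, γ j = 0 :=
        Finset.sum_eq_zero fun j hj => le_antisymm (h j hj) (hγ0 j)
      rw [hγ1] at this; norm_num at this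
    obtain ⟨j0, _, hj0⟩ := hex
    refine Finset.sum_pos' (fun j _ => mul_nonneg (hγ0 j) ((hQ j).posSemidef.dotProduct_mulVec_nonneg x)) ?_
    exact ⟨j0, Finset.mem_univ _, mul_pos hj0 ((hQ j0).dotProduct_mulVec_pos hx)⟩

private lemma posDef_invertible {P : Matrix (Fin n) (Fin n) ℝ} (hP : P.PosDef) :
    P * P⁻¹ = 1 ∧ P⁻¹ * P = 1 :=
  ⟨Matrix.mul_nonsing_inv _ hP.det_pos.ne'.isUnit,
   Matrix.nonsing_inv_mul _ hP.det_pos.ne'.isUnit⟩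

private lemma key_ineq {P : Matrix (Fin n) (Fin n) ℝ} (hP : P.PosDef)
    (x y : Fin n → ℝ) :
    2 * (x ⬝ᵥ y) ≤ x ⬝ᵥ P⁻¹ *ᵥ x + y ⬝ᵥ P *ᵥ y := by
  have hsymm : Pᵀ = P := hP.1.eq
  have hPinv := (posDef_invertible hP).1
  have h0 : 0 ≤ (y - P⁻¹ *ᵥ x) ⬝ᵥ P *ᵥ (y - P⁻¹ *ᵥ x) := (hP.posSemidef).dotProduct_mulVec_nonneg _
  have e1 : (P⁻¹ *ᵥ x) ⬝ᵥ (P *ᵥ y) = x ⬝ᵥ y := by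
    rw [Matrix.dotProduct_mulVec, ← Matrix.mulVec_transpose, hsymm,
      Matrix.mulVec_mulVec, hPinv, Matrix.one_mulVec]
  have e2 : y ⬝ᵥ (P *ᵥ (P⁻¹ *ᵥ x)) = x ⬝ᵥ y := by
    rw [Matrix.mulVec_mulVec, hPinv, Matrix.one_mulVec, dotProduct_comm]
  have e3 : (P⁻¹ *ᵥ x) ⬝ᵥ (P *ᵥ (P⁻¹ *ᵥ x)) = x ⬝ᵥ P⁻¹ *ᵥ x := by
    rw [Matrix.mulVec_mulVec, hPinv, Matrix.one_mulVec, dotProduct_comm]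
  rw [Matrix.mulVec_sub, sub_dotProduct, dotProduct_sub,
    dotProduct_sub, e1, e2, e3] at h0
  linarith

private lemma joint_convex {P P' : Matrix (Fin n) (Fin n) ℝ} (hP : P.PosDef) (hP' : P'.PosDef)
    {a b : ℝ} (ha : 0 ≤ a) (hb : 0 ≤ b) (x x' : Fin n → ℝ)
    (hPt : (a • P + b • P').PosDef) :
    (a • x + b • x') ⬝ᵥ (a • P + b • P')⁻¹ *ᵥ (a • x + b • x') ≤
      a * (x ⬝ᵥ P⁻¹ *ᵥ x) + b * (x' ⬝ᵥ P'⁻¹ *ᵥ x') := by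
  set Pt := a • P + b • P' with hPtdef
  set z := a • x + b • x' with hz
  set y := Pt⁻¹ *ᵥ z with hy
  have hPty : Pt *ᵥ y = z := by
    rw [hy, Matrix.mulVec_mulVec, (posDef_invertible hPt).1, Matrix.one_mulVec]
  have hzy : z ⬝ᵥ y = a * (x ⬝ᵥ y) + b * (x' ⬝ᵥ y) := by
    rw [hz, add_dotProduct, smul_dotProduct, smul_dotProduct,
      smul_eq_mul, smul_eq_mul]
  have hyPty : y ⬝ᵥ Pt *ᵥ y = a * (y ⬝ᵥ P *ᵥ y) + b * (y ⬝ᵥ P' *ᵥ y) := by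
    rw [hPtdef]
    rw [Matrix.add_mulVec, Matrix.smul_mulVec, Matrix.smul_mulVec,
      dotProduct_add, dotProduct_smul, dotProduct_smul,
      smul_eq_mul, smul_eq_mul]
  have hmain : z ⬝ᵥ Pt⁻¹ *ᵥ z = 2 * (z ⬝ᵥ y) - y ⬝ᵥ Pt *ᵥ y := by
    have h1 : y ⬝ᵥ Pt *ᵥ y = y ⬝ᵥ z := by rw [hPty]
    have h2 : y ⬝ᵥ z = z ⬝ᵥ y := dotProduct_comm _ _
    rw [h1, h2, ← hy]; ring
  have k1 := key_ineq hP x y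
  have k2 := key_ineq hP' x' y
  rw [hmain, hzy, hyPty]
  nlinarith [mul_le_mul_of_nonneg_left k1 ha, mul_le_mul_of_nonneg_left k2 hb]

private lemma basis_mem (j0 : Fin m) :
    (fun j => if j = j0 then (1:ℝ) else 0) ∈ stdSimplex ℝ (Fin m) := by
  constructor
  · intro j; dsimp only; split <;> norm_num
  · simp [Finset.sum_ite_eq']

private lemma basis_sum (Q : Fin m → Matrix (Fin n) (Fin n) ℝ) (j0 : Fin m) :
    ∑ j, (if j = j0 then (1:ℝ) else 0) • Q j = Q j0 := by
  have : ∀ j, (if j = j0 then (1:ℝ) else 0) • Q j = if j = j0 then Q j else 0 := by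
    intro j; split <;> simp
  rw [Finset.sum_congr rfl fun j _ => this j, Finset.sum_ite_eq']
  simp

end Aux

/-- the unit sublevel set of the composite quadratic Lyapunov function equals
the convex hull of the union of the ellipsoids `{x | xᵀ Q_j⁻¹ x ≤ 1}`. -/
theorem compQuad_unit_sublevel_eq_convexHull (m n : ℕ) (hm : 0 < m)
    (Q : Fin m → Matrix (Fin n) (Fin n) ℝ) (hQ : ∀ j, (Q j).PosDef) :
    {x : Fin n → ℝ | compQuad Q x ≤ 1} =
      convexHull ℝ (⋃ j : Fin m, {x : Fin n → ℝ | x ⬝ᵥ (Q j)⁻¹.mulVec x ≤ 1}) := by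
  set E := ⋃ j : Fin m, {x : Fin n → ℝ | x ⬝ᵥ (Q j)⁻¹.mulVec x ≤ 1} with hE
  set K := convexHull ℝ E with hK
  have j0 : Fin m := ⟨0, hm⟩
  -- basic facts
  have hΔne : (stdSimplex ℝ (Fin m)).Nonempty := ⟨_, basis_mem j0⟩
  have himgne : ∀ x : Fin n → ℝ,
      ((fun γ : Fin m → ℝ => x ⬝ᵥ ((∑ j, γ j • Q j)⁻¹).mulVec x) '' stdSimplex ℝ (Fin m)).Nonempty :=
    fun x => hΔne.image _
  have hbdd : ∀ x : Fin n → ℝ,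
      BddBelow ((fun γ : Fin m → ℝ => x ⬝ᵥ ((∑ j, γ j • Q j)⁻¹).mulVec x) '' stdSimplex ℝ (Fin m)) := by
    intro x
    refine ⟨0, ?_⟩
    rintro v ⟨γ, hγ, rfl⟩
    exact ((posDef_sum Q hQ hγ).inv.posSemidef).dotProduct_mulVec_nonneg x
  have hle : ∀ (x : Fin n → ℝ) {γ : Fin m → ℝ}, γ ∈ stdSimplex ℝ (Fin m) →
      compQuad Q x ≤ x ⬝ᵥ ((∑ j, γ j • Q j)⁻¹) *ᵥ x := by
    intro x γ hγ
    exact csInf_le (hbdd x) ⟨γ, hγ, rfl⟩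
  apply Set.Subset.antisymm
  · -- sublevel ⊆ hull, via attained minimum
    intro x hx
    simp only [Set.mem_setOf_eq] at hx
    -- continuity of γ ↦ f γ on the simplex
    have hsumcont : Continuous fun γ : Fin m → ℝ => ∑ j, γ j • Q j :=
      continuous_finset_sum _ fun j _ => (continuous_apply j).smul continuous_const
    have hinvcont : ContinuousOn (fun γ : Fin m → ℝ => (∑ j, γ j • Q j)⁻¹)
        (stdSimplex ℝ (Fin m)) := by
      intro γ hγ
      apply ContinuousAt.continuousWithinAt
      have hdet : IsUnit (∑ j, γ j • Q j).det := (posDef_sum Q hQ hγ).det_pos.ne'.isUnit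
      have h1 : ContinuousAt Inv.inv (∑ j, γ j • Q j) := by
        apply continuousAt_matrix_inv
        have := NormedRing.inverse_continuousAt hdet.unit
        rwa [hdet.unit_spec] at this
      have hco : (fun γ : Fin m → ℝ => (∑ j, γ j • Q j)⁻¹)
          = Inv.inv ∘ (fun γ : Fin m → ℝ => ∑ j, γ j • Q j) := rfl
      rw [hco]
      exact ContinuousAt.comp (x := γ) h1 hsumcont.continuousAt
    have hcont : ContinuousOn
        (fun γ : Fin m → ℝ => x ⬝ᵥ ((∑ j, γ j • Q j)⁻¹).mulVec x)
        (stdSimplex ℝ (Fin m)) := by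
      have houter : Continuous fun M : Matrix (Fin n) (Fin n) ℝ => x ⬝ᵥ M *ᵥ x :=
        Continuous.dotProduct continuous_const
          (continuous_id.matrix_mulVec continuous_const)
      exact houter.comp_continuousOn hinvcont
    obtain ⟨γ0, hγ0Δ, hγ0min⟩ :=
      (isCompact_stdSimplex ℝ (Fin m)).exists_isMinOn hΔne hcont
    -- the minimum value is at most 1
    set P := ∑ j, γ0 j • Q j with hPdef
    have hP : P.PosDef := posDef_sum Q hQ hγ0Δ
    have hval : x ⬝ᵥ P⁻¹ *ᵥ x ≤ 1 := by
      have hlb : x ⬝ᵥ P⁻¹ *ᵥ x ≤ compQuad Q x := by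
        refine le_csInf (himgne x) ?_
        rintro v ⟨γ, hγ, rfl⟩
        exact hγ0min hγ
      exact hlb.trans hx
    -- decomposition
    obtain ⟨y, hy⟩ : ∃ y, y = P⁻¹ *ᵥ x := ⟨_, rfl⟩
    have hxy : P *ᵥ y = x := by
      rw [hy, Matrix.mulVec_mulVec, (posDef_invertible hP).1, Matrix.one_mulVec]
    by_cases hy0 : y = 0
    · have : x = 0 := by rw [← hxy, hy0, Matrix.mulVec_zero]
      rw [this]
      apply subset_convexHull ℝ E
      exact Set.mem_iUnion.2 ⟨j0, by simp [zero_dotProduct]⟩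
    · obtain ⟨a, ha⟩ : ∃ a : Fin m → ℝ, a = fun j => y ⬝ᵥ Q j *ᵥ y := ⟨_, rfl⟩
      have hapos : ∀ j, 0 < a j := fun j => by rw [ha]; exact (hQ j).dotProduct_mulVec_pos hy0
      obtain ⟨lam, hlam⟩ : ∃ lam : Fin m → ℝ, lam = fun j => γ0 j * Real.sqrt (a j) := ⟨_, rfl⟩
      have hlamnn : ∀ j, 0 ≤ lam j := fun j => by
        rw [hlam]; exact mul_nonneg (hγ0Δ.1 j) (Real.sqrt_nonneg _)
      obtain ⟨z, hzdef⟩ : ∃ z : Fin m → (Fin n → ℝ),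
          z = fun j => (Real.sqrt (a j))⁻¹ • (Q j *ᵥ y) := ⟨_, rfl⟩
      have hzE : ∀ j, z j ∈ E := by
        intro j
        have hQinv := (posDef_invertible (hQ j)).2
        have hq : (Q j *ᵥ y) ⬝ᵥ (Q j)⁻¹ *ᵥ (Q j *ᵥ y) = a j := by
          rw [Matrix.mulVec_mulVec, hQinv, Matrix.one_mulVec, dotProduct_comm, ha]
        have hsq : ((Real.sqrt (a j))⁻¹) * ((Real.sqrt (a j))⁻¹) * a j = 1 := by
          have hne : Real.sqrt (a j) ≠ 0 := ne_of_gt (Real.sqrt_pos.2 (hapos j))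
          have key : ((Real.sqrt (a j))⁻¹) * ((Real.sqrt (a j))⁻¹)
              * (Real.sqrt (a j) * Real.sqrt (a j)) = 1 := by field_simp
          rw [Real.mul_self_sqrt (le_of_lt (hapos j))] at key
          exact key
        refine Set.mem_iUnion.2 ⟨j, ?_⟩
        show z j ⬝ᵥ (Q j)⁻¹ *ᵥ z j ≤ 1
        rw [hzdef]
        simp only [smul_dotProduct, Matrix.mulVec_smul, dotProduct_smul,
          smul_eq_mul]
        rw [hq, ← mul_assoc, hsq]
      have hxsum : x = ∑ j, lam j • z j := by
        rw [← hxy, hPdef, sum_mulVec']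
        refine Finset.sum_congr rfl fun j _ => ?_
        rw [Matrix.smul_mulVec, hzdef, hlam, smul_smul]
        congr 1
        dsimp only
        rw [mul_assoc, mul_inv_cancel₀ (ne_of_gt (Real.sqrt_pos.2 (hapos j))), mul_one]
      -- sum of lambdas ≤ 1
      have hsumlam : ∑ j, lam j ≤ 1 := by
        have hyPy : y ⬝ᵥ P *ᵥ y = ∑ j, γ0 j * a j := by
          rw [hPdef, quad_expand Q γ0 y, ha]
        have hyx : y ⬝ᵥ P *ᵥ y = x ⬝ᵥ P⁻¹ *ᵥ x := by
          rw [hxy, dotProduct_comm, hy]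
        have hcs : ∑ j, lam j ≤ Real.sqrt (∑ j, γ0 j * a j) := by
          have h1 : ∀ j, lam j = Real.sqrt (γ0 j) * Real.sqrt (γ0 j * a j) := by
            intro j
            rw [Real.sqrt_mul (hγ0Δ.1 j), hlam, ← mul_assoc, Real.mul_self_sqrt (hγ0Δ.1 j)]
          calc ∑ j, lam j = ∑ j, Real.sqrt (γ0 j) * Real.sqrt (γ0 j * a j) :=
                Finset.sum_congr rfl fun j _ => h1 j
            _ ≤ Real.sqrt (∑ j, γ0 j) * Real.sqrt (∑ j, γ0 j * a j) :=
                Real.sum_sqrt_mul_sqrt_le _ (fun j => hγ0Δ.1 j)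
                  (fun j => mul_nonneg (hγ0Δ.1 j) (le_of_lt (hapos j)))
            _ = Real.sqrt (∑ j, γ0 j * a j) := by rw [hγ0Δ.2, Real.sqrt_one, one_mul]
        have : Real.sqrt (∑ j, γ0 j * a j) ≤ 1 := by
          rw [Real.sqrt_le_one]  -- iff? adjust
          rw [← hyPy, hyx]; exact hval
        linarith
      -- assemble convex combination
      set s := ∑ j, lam j with hs
      have hsnn : 0 ≤ s := Finset.sum_nonneg fun j _ => hlamnn j
      by_cases hs0 : s = 0
      · have hall : ∀ j ∈ Finset.univ, lam j = 0 := by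
          intro j hj
          exact (Finset.sum_eq_zero_iff_of_nonneg fun i _ => hlamnn i).1 hs0 j hj
        have : x = 0 := by
          rw [hxsum]
          exact Finset.sum_eq_zero fun j hj => by rw [hall j hj, zero_smul]
        rw [this]
        apply subset_convexHull ℝ E
        exact Set.mem_iUnion.2 ⟨j0, by simp [zero_dotProduct]⟩
      · have hspos : 0 < s := lt_of_le_of_ne hsnn (Ne.symm hs0)
        have hu : Finset.univ.centerMass lam z ∈ K := by
          exact Finset.centerMass_mem_convexHull _ (fun j _ => hlamnn j)
            (by rw [← hs]; exact hspos) (fun j _ => hzE j)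
        have h0K : (0 : Fin n → ℝ) ∈ K := by
          apply subset_convexHull ℝ E
          exact Set.mem_iUnion.2 ⟨j0, by simp [zero_dotProduct]⟩
        have hxdec : x = s • Finset.univ.centerMass lam z + (1 - s) • (0 : Fin n → ℝ) := by
          rw [Finset.centerMass, smul_zero, add_zero, smul_smul,
            mul_inv_cancel₀ hs0, one_smul]
          exact hxsum
        rw [hxdec]
        exact (convex_convexHull ℝ E) hu h0K hsnn (by linarith) (by ring)
  · -- hull ⊆ sublevel
    apply convexHull_min
    · -- each ellipsoid is in the sublevel set
      intro x hx
      obtain ⟨j, hj⟩ := Set.mem_iUnion.1 hx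
      simp only [Set.mem_setOf_eq] at hj ⊢
      have := hle x (basis_mem j)
      simp only [basis_sum Q j] at this
      exact this.trans hj
    · -- sublevel set is convex
      intro x hx x' hx' aa bb haa hbb habb
      simp only [Set.mem_setOf_eq] at hx hx' ⊢
      refine le_of_forall_pos_le_add ?_
      intro ε hε
      obtain ⟨v1, ⟨γ, hγ, rfl⟩, hv1⟩ :=
        exists_lt_of_csInf_lt (himgne x) (lt_of_le_of_lt hx (by linarith : (1:ℝ) < 1 + ε))
      obtain ⟨v2, ⟨γ', hγ', rfl⟩, hv2⟩ :=
        exists_lt_of_csInf_lt (himgne x') (lt_of_le_of_lt hx' (by linarith : (1:ℝ) < 1 + ε))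
      have hγt : aa • γ + bb • γ' ∈ stdSimplex ℝ (Fin m) :=
        (convex_stdSimplex ℝ (Fin m)) hγ hγ' haa hbb habb
      have hsumeq : ∑ j, (aa • γ + bb • γ') j • Q j
          = aa • (∑ j, γ j • Q j) + bb • (∑ j, γ' j • Q j) := by
        rw [Finset.smul_sum, Finset.smul_sum, ← Finset.sum_add_distrib]
        refine Finset.sum_congr rfl fun j _ => ?_
        simp only [Pi.add_apply, Pi.smul_apply, smul_eq_mul, add_smul, smul_smul]
      have hjc := joint_convex (posDef_sum Q hQ hγ) (posDef_sum Q hQ hγ') haa hbb x x'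
        (hsumeq ▸ posDef_sum Q hQ hγt)
      have hcq := hle (aa • x + bb • x') hγt
      rw [hsumeq] at hcq
      calc compQuad Q (aa • x + bb • x') ≤ _ := hcq
        _ ≤ aa * (x ⬝ᵥ (∑ j, γ j • Q j)⁻¹ *ᵥ x) + bb * (x' ⬝ᵥ (∑ j, γ' j • Q j)⁻¹ *ᵥ x') := hjc
        _ ≤ aa * (1 + ε) + bb * (1 + ε) := by
            have := mul_le_mul_of_nonneg_left (le_of_lt hv1) haa
            have := mul_le_mul_of_nonneg_left (le_of_lt hv2) hbb
            nlinarith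
        _ = 1 + ε := by rw [← add_mul, habb, one_mul]
end

section
/- Let Q_1, …, Q_m be positive definite real n×n matrices, let α > 0, and let A₀ be a real n×n matrix such that A₀ Q_j + Q_j A₀ᵀ + 2α Q_j is negative semidefinite for every j = 1, …, m. Let ε : ℝ → (Fin n → ℝ) be differentiable with ε'(t) = A₀ ε(t) for all t. Then for all t ≥ 0, V_c(ε(t)) ≤ e^{−2αt} V_c(ε(0)); equivalently, ‖ε(t)‖_c ≤ e^{−αt} ‖ε(0)‖_c. -/
open Matrix

/-- The composite vector norm `‖x‖_c = √(V_c(x))`. -/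
noncomputable def compNorm {m n : ℕ} (Q : Fin m → Matrix (Fin n) (Fin n) ℝ)
    (x : Fin n → ℝ) : ℝ :=
  Real.sqrt (compQuad Q x)


theorem sum_smul_mulVec {m n : ℕ} (γ : Fin m → ℝ) (Ms : Fin m → Matrix (Fin n) (Fin n) ℝ)
    (x : Fin n → ℝ) :
    (∑ j, γ j • Ms j) *ᵥ x = ∑ j, γ j • (Ms j *ᵥ x) := by
  rw [show (∑ j, γ j • Ms j) *ᵥ x = mulVec.addMonoidHomLeft x (∑ j, γ j • Ms j) from rfl,
    map_sum]
  congr 1; funext j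
  exact Matrix.smul_mulVec (γ j) (Ms j) x

theorem dot_sum_smul {m n : ℕ} (γ : Fin m → ℝ) (Ms : Fin m → Matrix (Fin n) (Fin n) ℝ)
    (x : Fin n → ℝ) :
    x ⬝ᵥ ((∑ j, γ j • Ms j) *ᵥ x) = ∑ j, γ j * (x ⬝ᵥ (Ms j *ᵥ x)) := by
  rw [sum_smul_mulVec]
  simp only [dotProduct, Finset.sum_apply, Pi.smul_apply, smul_eq_mul, Finset.mul_sum]
  rw [Finset.sum_comm]
  exact Finset.sum_congr rfl fun j _ => Finset.sum_congr rfl fun i _ => by ring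

theorem isHermitian_sum_smul {m n : ℕ} (γ : Fin m → ℝ) (Ms : Fin m → Matrix (Fin n) (Fin n) ℝ)
    (hMs : ∀ j, (Ms j).IsHermitian) : (∑ j, γ j • Ms j).IsHermitian := by
  unfold Matrix.IsHermitian
  rw [Matrix.conjTranspose_sum]
  exact Finset.sum_congr rfl fun j _ => by
    rw [Matrix.conjTranspose_smul, (hMs j).eq, star_trivial]

theorem simplex_combo_posDef {m n : ℕ} (Q : Fin m → Matrix (Fin n) (Fin n) ℝ)
    (hQ : ∀ j, (Q j).PosDef) (γ : Fin m → ℝ) (hγ : γ ∈ stdSimplex ℝ (Fin m)) :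
    (∑ j, γ j • Q j).PosDef := by
  refine Matrix.PosDef.of_dotProduct_mulVec_pos (isHermitian_sum_smul γ Q fun j => (hQ j).isHermitian) fun x hx => ?_
  rw [star_trivial, dot_sum_smul]
  have hjpos : ∃ j ∈ Finset.univ, 0 < γ j := by
    by_contra h
    push_neg at h
    have : ∑ j, γ j = 0 := Finset.sum_eq_zero fun j hj => le_antisymm (h j hj) (hγ.1 j)
    rw [hγ.2] at this; norm_num at this
  obtain ⟨j₀, _, hj₀⟩ := hjpos
  refine Finset.sum_pos' (fun j _ => ?_) ⟨j₀, Finset.mem_univ j₀, ?_⟩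
  · have h0 : (0:ℝ) ≤ x ⬝ᵥ (Q j *ᵥ x) := by
      simpa [star_trivial] using (hQ j).posSemidef.dotProduct_mulVec_nonneg x
    exact mul_nonneg (hγ.1 j) h0
  · have h0 : (0:ℝ) < x ⬝ᵥ (Q j₀ *ᵥ x) := by
      simpa [star_trivial] using (hQ j₀).dotProduct_mulVec_pos hx
    exact mul_pos hj₀ h0

theorem simplex_combo_LMI {m n : ℕ} (Q : Fin m → Matrix (Fin n) (Fin n) ℝ) (α : ℝ)
    (A₀ : Matrix (Fin n) (Fin n) ℝ)
    (hLMI : ∀ j : Fin m, (-(A₀ * Q j + Q j * A₀ᵀ + (2 * α) • Q j)).PosSemidef)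
    (γ : Fin m → ℝ) (hγ : γ ∈ stdSimplex ℝ (Fin m)) :
    (-(A₀ * (∑ j, γ j • Q j) + (∑ j, γ j • Q j) * A₀ᵀ
      + (2 * α) • (∑ j, γ j • Q j))).PosSemidef := by
  have heq : -(A₀ * (∑ j, γ j • Q j) + (∑ j, γ j • Q j) * A₀ᵀ
      + (2 * α) • (∑ j, γ j • Q j))
      = ∑ j, γ j • (-(A₀ * Q j + Q j * A₀ᵀ + (2 * α) • Q j)) := by
    rw [Finset.mul_sum, Finset.sum_mul, Finset.smul_sum, ← Finset.sum_add_distrib,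
      ← Finset.sum_add_distrib, ← Finset.sum_neg_distrib]
    exact Finset.sum_congr rfl fun j _ => by
      rw [mul_smul_comm, smul_mul_assoc, smul_comm (2*α) (γ j), ← smul_add, ← smul_add,
        ← smul_neg]
  rw [heq]
  refine Matrix.PosSemidef.of_dotProduct_mulVec_nonneg (isHermitian_sum_smul γ _ fun j => (hLMI j).isHermitian) fun x => ?_
  rw [star_trivial, dot_sum_smul]
  refine Finset.sum_nonneg fun j _ => mul_nonneg (hγ.1 j) ?_
  simpa [star_trivial] using (hLMI j).dotProduct_mulVec_nonneg x

theorem quad_decay {n : ℕ} (P A₀ : Matrix (Fin n) (Fin n) ℝ) (hP : P.PosDef)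
    (α : ℝ)
    (hL : (-(A₀ * P + P * A₀ᵀ + (2 * α) • P)).PosSemidef)
    (ε : ℝ → (Fin n → ℝ))
    (hε : ∀ t : ℝ, HasDerivAt ε (A₀.mulVec (ε t)) t) :
    ∀ t : ℝ, 0 ≤ t →
      ε t ⬝ᵥ (P⁻¹ *ᵥ ε t) ≤ Real.exp (-(2 * α) * t) * (ε 0 ⬝ᵥ (P⁻¹ *ᵥ ε 0)) := by
  set M := P⁻¹ with hM
  have hMpd : M.PosDef := hP.inv
  have hMH : Mᴴ = M := hMpd.isHermitian
  have hPM : P * M = 1 := Matrix.mul_nonsing_inv P (isUnit_iff_isUnit_det _ |>.1 hP.isUnit)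
  have hMP : M * P = 1 := Matrix.nonsing_inv_mul P (isUnit_iff_isUnit_det _ |>.1 hP.isUnit)
  -- key PSD matrix
  have hKey : (-(A₀ᵀ * M + M * A₀ + (2 * α) • M)).PosSemidef := by
    have h := hL.mul_mul_conjTranspose_same M
    rw [hMH] at h
    have heq : M * -(A₀ * P + P * A₀ᵀ + (2 * α) • P) * M
        = -(A₀ᵀ * M + M * A₀ + (2 * α) • M) := by
      have h1 : M * (A₀ * P) * M = M * A₀ := by
        simp only [mul_assoc]; rw [hPM, mul_one]
      have h2 : M * (P * A₀ᵀ) * M = A₀ᵀ * M := by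
        simp only [← mul_assoc]; rw [hMP, one_mul]
      have h3 : M * ((2 * α) • P) * M = (2 * α) • M := by
        rw [Matrix.mul_smul, Matrix.smul_mul, show M * P * M = (M * P) * M from rfl, hMP,
          Matrix.one_mul]
      calc M * -(A₀ * P + P * A₀ᵀ + (2 * α) • P) * M
          = -(M * (A₀ * P) * M + M * (P * A₀ᵀ) * M + M * ((2 * α) • P) * M) := by
            noncomm_ring
        _ = -(M * A₀ + A₀ᵀ * M + (2 * α) • M) := by rw [h1, h2, h3]
        _ = -(A₀ᵀ * M + M * A₀ + (2 * α) • M) := by abel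
    rwa [heq] at h
  -- pointwise quadratic inequality
  have hquad : ∀ x : Fin n → ℝ,
      x ⬝ᵥ ((A₀ᵀ * M + M * A₀ + (2 * α) • M) *ᵥ x) ≤ 0 := by
    intro x
    have := hKey.dotProduct_mulVec_nonneg x
    simp only [star_trivial, Matrix.neg_mulVec, dotProduct_neg] at this
    linarith
  -- derivative of the quadratic form along the flow
  set g : ℝ → ℝ := fun t => ε t ⬝ᵥ (M *ᵥ ε t) with hgdef
  have hg : ∀ t : ℝ, HasDerivAt g
      ((A₀ *ᵥ ε t) ⬝ᵥ (M *ᵥ ε t) + ε t ⬝ᵥ (M *ᵥ (A₀ *ᵥ ε t))) t := by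
    intro t
    have hcomp : ∀ i, HasDerivAt (fun s => ε s i) ((A₀ *ᵥ ε t) i) t :=
      fun i => hasDerivAt_pi.mp (hε t) i
    have hinner : ∀ i, HasDerivAt (fun s => ∑ j, M i j * ε s j)
        (∑ j, M i j * (A₀ *ᵥ ε t) j) t := by
      intro i
      exact HasDerivAt.fun_sum fun j _ => (hcomp j).const_mul (M i j)
    have : HasDerivAt (fun s => ∑ i, ε s i * ∑ j, M i j * ε s j)
        (∑ i, ((A₀ *ᵥ ε t) i * ∑ j, M i j * ε t j + ε t i * ∑ j, M i j * (A₀ *ᵥ ε t) j)) t :=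
      HasDerivAt.fun_sum fun i _ => (hcomp i).mul (hinner i)
    convert this using 1
    · rfl
    · rw [Finset.sum_add_distrib]
      congr 1 <;> simp [dotProduct, Matrix.mulVec]
  -- the exponentially weighted function is antitone
  set f : ℝ → ℝ := fun t => Real.exp ((2 * α) * t) * g t with hfdef
  have hexp : ∀ t : ℝ, HasDerivAt (fun s => Real.exp ((2 * α) * s))
      (Real.exp ((2 * α) * t) * (2 * α)) t := by
    intro t
    simpa using (((hasDerivAt_id t).const_mul (2 * α)).exp)
  have hf : ∀ t : ℝ, HasDerivAt f
      (Real.exp ((2 * α) * t) * (2 * α) * g t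
        + Real.exp ((2 * α) * t) * ((A₀ *ᵥ ε t) ⬝ᵥ (M *ᵥ ε t) + ε t ⬝ᵥ (M *ᵥ (A₀ *ᵥ ε t)))) t :=
    fun t => (hexp t).mul (hg t)
  have hf' : ∀ t : ℝ,
      Real.exp ((2 * α) * t) * (2 * α) * g t
        + Real.exp ((2 * α) * t) * ((A₀ *ᵥ ε t) ⬝ᵥ (M *ᵥ ε t) + ε t ⬝ᵥ (M *ᵥ (A₀ *ᵥ ε t))) ≤ 0 := by
    intro t
    have hq := hquad (ε t)
    have hexp0 : (0:ℝ) < Real.exp ((2 * α) * t) := Real.exp_pos _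
    have h1 : (A₀ *ᵥ ε t) ⬝ᵥ (M *ᵥ ε t) = ε t ⬝ᵥ ((A₀ᵀ * M) *ᵥ ε t) := by
      rw [← Matrix.mulVec_mulVec, Matrix.dotProduct_mulVec (ε t) A₀ᵀ,
        Matrix.vecMul_transpose]
    have h2 : ε t ⬝ᵥ (M *ᵥ (A₀ *ᵥ ε t)) = ε t ⬝ᵥ ((M * A₀) *ᵥ ε t) := by
      rw [Matrix.mulVec_mulVec]
    have h3 : (2 * α) * g t = ε t ⬝ᵥ (((2 * α) • M) *ᵥ ε t) := by
      simp [hgdef, Matrix.smul_mulVec, dotProduct_smul, smul_eq_mul]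
    have hsum : (2 * α) * g t + ((A₀ *ᵥ ε t) ⬝ᵥ (M *ᵥ ε t) + ε t ⬝ᵥ (M *ᵥ (A₀ *ᵥ ε t)))
        = ε t ⬝ᵥ ((A₀ᵀ * M + M * A₀ + (2 * α) • M) *ᵥ ε t) := by
      rw [h1, h2, h3]
      simp [Matrix.add_mulVec, dotProduct_add]
      ring
    calc Real.exp ((2 * α) * t) * (2 * α) * g t
          + Real.exp ((2 * α) * t) * ((A₀ *ᵥ ε t) ⬝ᵥ (M *ᵥ ε t) + ε t ⬝ᵥ (M *ᵥ (A₀ *ᵥ ε t)))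
        = Real.exp ((2 * α) * t)
            * ((2 * α) * g t + ((A₀ *ᵥ ε t) ⬝ᵥ (M *ᵥ ε t) + ε t ⬝ᵥ (M *ᵥ (A₀ *ᵥ ε t)))) := by
          ring
      _ = Real.exp ((2 * α) * t) * (ε t ⬝ᵥ ((A₀ᵀ * M + M * A₀ + (2 * α) • M) *ᵥ ε t)) := by
          rw [hsum]
      _ ≤ 0 := mul_nonpos_of_nonneg_of_nonpos hexp0.le hq
  have hanti : Antitone f := antitone_of_hasDerivAt_nonpos hf hf'
  intro t ht
  have hft : f t ≤ f 0 := hanti ht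
  have hf0 : f 0 = g 0 := by simp [hfdef]
  have hgt : g t = Real.exp (-(2 * α) * t) * f t := by
    rw [hfdef]
    simp only []
    rw [← mul_assoc, ← Real.exp_add]
    ring_nf
    simp
  calc ε t ⬝ᵥ (M *ᵥ ε t) = g t := rfl
    _ = Real.exp (-(2 * α) * t) * f t := hgt
    _ ≤ Real.exp (-(2 * α) * t) * f 0 :=
        mul_le_mul_of_nonneg_left hft (Real.exp_nonneg _)
    _ = Real.exp (-(2 * α) * t) * (ε 0 ⬝ᵥ (M *ᵥ ε 0)) := by rw [hf0]

/-- if `A₀ Q_j + Q_j A₀ᵀ + 2α Q_j ⪯ 0` for every `j` and `ε' = A₀ ε`, then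
`V_c(ε(t)) ≤ e^{-2αt} V_c(ε(0))`, equivalently `‖ε(t)‖_c ≤ e^{-αt} ‖ε(0)‖_c`,
for all `t ≥ 0`. -/
theorem compQuad_lyapunov_decay (m n : ℕ) (hm : 0 < m)
    (Q : Fin m → Matrix (Fin n) (Fin n) ℝ) (hQ : ∀ j, (Q j).PosDef)
    (α : ℝ) (hα : 0 < α)
    (A₀ : Matrix (Fin n) (Fin n) ℝ)
    (hLMI : ∀ j : Fin m, (-(A₀ * Q j + Q j * A₀ᵀ + (2 * α) • Q j)).PosSemidef)
    (ε : ℝ → (Fin n → ℝ))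
    (hε : ∀ t : ℝ, HasDerivAt ε (A₀.mulVec (ε t)) t) :
    ∀ t : ℝ, 0 ≤ t →
      compQuad Q (ε t) ≤ Real.exp (-(2 * α) * t) * compQuad Q (ε 0) ∧
      compNorm Q (ε t) ≤ Real.exp (-α * t) * compNorm Q (ε 0) := by
  -- setup
  set F : (Fin n → ℝ) → (Fin m → ℝ) → ℝ :=
    fun x γ => x ⬝ᵥ ((∑ j, γ j • Q j)⁻¹).mulVec x with hF
  have hSne : (stdSimplex ℝ (Fin m)).Nonempty := by
    refine ⟨fun _ => (m : ℝ)⁻¹, fun _ => by positivity, ?_⟩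
    simp [Finset.sum_const, Finset.card_univ]
    field_simp
  have hFnonneg : ∀ x, ∀ γ ∈ stdSimplex ℝ (Fin m), 0 ≤ F x γ := by
    intro x γ hγ
    have := ((simplex_combo_posDef Q hQ γ hγ).inv).posSemidef.dotProduct_mulVec_nonneg x
    simpa [star_trivial] using this
  have hbdd : ∀ x, BddBelow (F x '' stdSimplex ℝ (Fin m)) := by
    intro x
    exact ⟨0, fun v ⟨γ, hγ, hv⟩ => hv ▸ hFnonneg x γ hγ⟩
  have hne : ∀ x, (F x '' stdSimplex ℝ (Fin m)).Nonempty := fun x => hSne.image _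
  have hcq : ∀ x, compQuad Q x = sInf (F x '' stdSimplex ℝ (Fin m)) := fun x => rfl
  have hcqnonneg : ∀ x, 0 ≤ compQuad Q x := by
    intro x
    rw [hcq]
    exact le_csInf (hne x) fun v ⟨γ, hγ, hv⟩ => hv ▸ hFnonneg x γ hγ
  -- pointwise decay for each γ in the simplex
  have hdecay : ∀ γ ∈ stdSimplex ℝ (Fin m), ∀ t : ℝ, 0 ≤ t →
      F (ε t) γ ≤ Real.exp (-(2 * α) * t) * F (ε 0) γ := by
    intro γ hγ t ht
    exact quad_decay _ A₀ (simplex_combo_posDef Q hQ γ hγ) α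
      (simplex_combo_LMI Q α A₀ hLMI γ hγ) ε hε t ht
  intro t ht
  have hexp : (0:ℝ) < Real.exp (-(2 * α) * t) := Real.exp_pos _
  have hmain : compQuad Q (ε t) ≤ Real.exp (-(2 * α) * t) * compQuad Q (ε 0) := by
    rw [hcq (ε 0), ← div_le_iff₀' hexp]
    refine le_csInf (hne (ε 0)) fun v ⟨γ, hγ, hv⟩ => ?_
    rw [div_le_iff₀' hexp]
    calc compQuad Q (ε t) ≤ F (ε t) γ := csInf_le (hbdd (ε t)) ⟨γ, hγ, rfl⟩
      _ ≤ Real.exp (-(2 * α) * t) * F (ε 0) γ := hdecay γ hγ t ht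
      _ = Real.exp (-(2 * α) * t) * v := by rw [hv]
  refine ⟨hmain, ?_⟩
  have hsq : Real.exp (-(2 * α) * t) = Real.exp (-α * t) * Real.exp (-α * t) := by
    rw [← Real.exp_add]; ring_nf
  calc compNorm Q (ε t) = Real.sqrt (compQuad Q (ε t)) := rfl
    _ ≤ Real.sqrt (Real.exp (-(2 * α) * t) * compQuad Q (ε 0)) := Real.sqrt_le_sqrt hmain
    _ = Real.sqrt (Real.exp (-(2 * α) * t)) * Real.sqrt (compQuad Q (ε 0)) :=
        Real.sqrt_mul hexp.le _
    _ = Real.exp (-α * t) * compNorm Q (ε 0) := by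
        rw [hsq, Real.sqrt_mul_self (Real.exp_nonneg _)]; rfl
end

section
/- Let Q_1, …, Q_m be positive definite real n×n matrices, α > 0, and A₀ a real n×n matrix with A₀ Q_j + Q_j A₀ᵀ + 2α Q_j negative semidefinite for every j. Let x, x̂ : ℝ → (Fin n → ℝ) be differentiable with ε(t) = x(t) − x̂(t) satisfying ε'(t) = A₀ ε(t) for all t. Let v_1, …, v_N : ℝ → (Fin n → ℝ) be such that for every t ≥ 0, x̂(t) lies in the convex hull of {v_1(t), …, v_N(t)}. Then for every t ≥ 0 there exists an index i such that ‖x(t)‖_c ≤ ‖v_i(t)‖_c + e^{−αt} ‖x(0) − x̂(0)‖_c. -/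
open Matrix

open Pointwise

namespace BarrierAux

variable {m n : ℕ}

/-- real quadratic form -/
noncomputable def qf (M : Matrix (Fin n) (Fin n) ℝ) (x : Fin n → ℝ) : ℝ := x ⬝ᵥ M *ᵥ x

lemma psd_qf_nonneg {M : Matrix (Fin n) (Fin n) ℝ} (h : M.PosSemidef) (x : Fin n → ℝ) :
    0 ≤ qf M x := by
  have := h.dotProduct_mulVec_nonneg x
  simpa [qf, star_trivial] using this

lemma posdef_qf_pos {M : Matrix (Fin n) (Fin n) ℝ} (h : M.PosDef) {x : Fin n → ℝ} (hx : x ≠ 0) :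
    0 < qf M x := by
  have := h.dotProduct_mulVec_pos hx
  simpa [qf, star_trivial] using this

lemma transpose_eq {M : Matrix (Fin n) (Fin n) ℝ} (h : M.IsHermitian) : Mᵀ = M := by
  ext i j
  simpa [Matrix.conjTranspose_apply] using (congrFun (congrFun h.eq j) i).symm

lemma mulVec_dotProduct' (A : Matrix (Fin n) (Fin n) ℝ) (x w : Fin n → ℝ) :
    (A *ᵥ x) ⬝ᵥ w = x ⬝ᵥ Aᵀ *ᵥ w := by
  rw [Matrix.mulVec_transpose, dotProduct_comm, Matrix.dotProduct_mulVec, dotProduct_comm]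


lemma dual_ineq {P : Matrix (Fin n) (Fin n) ℝ} (hP : P.PosDef) (x y : Fin n → ℝ) :
    2 * (x ⬝ᵥ y) - qf P y ≤ qf P⁻¹ x := by
  have hdet : IsUnit P.det := (Matrix.isUnit_iff_isUnit_det P).1 hP.isUnit
  have hPP : P * P⁻¹ = 1 := Matrix.mul_nonsing_inv P hdet
  have hPP' : P⁻¹ * P = 1 := Matrix.nonsing_inv_mul P hdet
  have hsymm : (P⁻¹)ᵀ = P⁻¹ := transpose_eq hP.inv.isHermitian
  have h0 : 0 ≤ qf P (y - P⁻¹ *ᵥ x) := psd_qf_nonneg hP.posSemidef _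
  have e1 : P *ᵥ (P⁻¹ *ᵥ x) = x := by
    rw [Matrix.mulVec_mulVec, hPP, Matrix.one_mulVec]
  have e2 : (P⁻¹ *ᵥ x) ⬝ᵥ (P *ᵥ y) = x ⬝ᵥ y := by
    rw [mulVec_dotProduct', hsymm, Matrix.mulVec_mulVec, hPP', Matrix.one_mulVec]
  have expand : qf P (y - P⁻¹ *ᵥ x)
      = qf P y - y ⬝ᵥ x - x ⬝ᵥ y + qf P⁻¹ x := by
    unfold qf
    rw [Matrix.mulVec_sub, sub_dotProduct, dotProduct_sub, dotProduct_sub, e1, e2,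
      mulVec_dotProduct' P⁻¹ x x, hsymm]
    ring
  have hyx : y ⬝ᵥ x = x ⬝ᵥ y := dotProduct_comm y x
  rw [expand, hyx] at h0
  linarith

lemma qf_smul (M : Matrix (Fin n) (Fin n) ℝ) (c : ℝ) (x : Fin n → ℝ) :
    qf M (c • x) = c ^ 2 * qf M x := by
  unfold qf
  rw [Matrix.mulVec_smul, smul_dotProduct, smul_eq_mul, dotProduct_smul, smul_eq_mul]
  ring


lemma qf_sum_smul (Q : Fin m → Matrix (Fin n) (Fin n) ℝ) (γ : Fin m → ℝ) (x : Fin n → ℝ) :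
    qf (∑ j, γ j • Q j) x = ∑ j, γ j * qf (Q j) x := by
  classical
  have key : ∀ s : Finset (Fin m),
      qf (∑ j ∈ s, γ j • Q j) x = ∑ j ∈ s, γ j * qf (Q j) x := by
    intro s
    induction s using Finset.induction_on with
    | empty => simp [qf]
    | @insert a s ha ih =>
        rw [Finset.sum_insert ha, Finset.sum_insert ha, qf, Matrix.add_mulVec, dotProduct_add,
          Matrix.smul_mulVec, dotProduct_smul, smul_eq_mul]
        rw [qf] at ih
        rw [ih]
        rfl
  exact key Finset.univ

lemma sum_smul_posDef {Q : Fin m → Matrix (Fin n) (Fin n) ℝ} (hQ : ∀ j, (Q j).PosDef)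
    {γ : Fin m → ℝ} (hγ : γ ∈ stdSimplex ℝ (Fin m)) : (∑ j, γ j • Q j).PosDef := by
  obtain ⟨hγ0, hγ1⟩ := hγ
  have hherm : (∑ j, γ j • Q j).IsHermitian := by
    have : ∀ j : Fin m, (γ j • Q j).IsHermitian := fun j => by
      unfold Matrix.IsHermitian
      ext i k
      simp only [Matrix.conjTranspose_apply, Matrix.smul_apply, star_smul, star_trivial,
        smul_eq_mul]
      have := congrFun (congrFun (transpose_eq (hQ j).isHermitian) k) i
      simp only [Matrix.transpose_apply] at this
      rw [this]
    classical
    have key : ∀ s : Finset (Fin m), (∑ j ∈ s, γ j • Q j).IsHermitian := by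
      intro s
      induction s using Finset.induction_on with
      | empty => simp [Matrix.isHermitian_zero]
      | @insert a s ha ih => rw [Finset.sum_insert ha]; exact (this a).add ih
    exact key Finset.univ
  refine .of_dotProduct_mulVec_pos hherm fun z hz => ?_
  have key : (z ⬝ᵥ (∑ j, γ j • Q j) *ᵥ z) = ∑ j, γ j * qf (Q j) z := qf_sum_smul Q γ z
  rw [star_trivial, key]
  obtain ⟨j0, hj0⟩ : ∃ j0, 0 < γ j0 := by
    by_contra h
    push_neg at h
    have : ∀ j ∈ Finset.univ, γ j = 0 := fun j _ => le_antisymm (h j) (hγ0 j)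
    rw [Finset.sum_congr rfl this] at hγ1
    simp at hγ1
  refine Finset.sum_pos' (fun j _ => mul_nonneg (hγ0 j) (psd_qf_nonneg (hQ j).posSemidef z))
    ⟨j0, Finset.mem_univ j0, mul_pos hj0 (posdef_qf_pos (hQ j0) hz)⟩

lemma qf_inv_convex {P₁ P₂ P : Matrix (Fin n) (Fin n) ℝ}
    (h1 : P₁.PosDef) (h2 : P₂.PosDef) (hP : P.PosDef) {θ₁ θ₂ : ℝ}
    (hθ₁ : 0 ≤ θ₁) (hθ₂ : 0 ≤ θ₂) (hPeq : P = θ₁ • P₁ + θ₂ • P₂) (x₁ x₂ : Fin n → ℝ) :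
    qf P⁻¹ (θ₁ • x₁ + θ₂ • x₂) ≤ θ₁ * qf P₁⁻¹ x₁ + θ₂ * qf P₂⁻¹ x₂ := by
  set x : Fin n → ℝ := θ₁ • x₁ + θ₂ • x₂ with hx
  set y : Fin n → ℝ := P⁻¹ *ᵥ x with hy
  have hdet : IsUnit P.det := (Matrix.isUnit_iff_isUnit_det P).1 hP.isUnit
  have hPP : P * P⁻¹ = 1 := Matrix.mul_nonsing_inv P hdet
  have hsymm : (P⁻¹)ᵀ = P⁻¹ := transpose_eq hP.inv.isHermitian
  have hxy : x ⬝ᵥ y = qf P⁻¹ x := rfl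
  have hyPy : qf P y = qf P⁻¹ x := by
    unfold qf
    rw [hy, Matrix.mulVec_mulVec, hPP, Matrix.one_mulVec, mulVec_dotProduct' P⁻¹ x x, hsymm]
  have hid : qf P⁻¹ x = θ₁ * (2 * (x₁ ⬝ᵥ y) - qf P₁ y) + θ₂ * (2 * (x₂ ⬝ᵥ y) - qf P₂ y) := by
    have hxdot : x ⬝ᵥ y = θ₁ * (x₁ ⬝ᵥ y) + θ₂ * (x₂ ⬝ᵥ y) := by
      rw [hx, add_dotProduct, smul_dotProduct, smul_dotProduct, smul_eq_mul, smul_eq_mul]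
    have hPy : qf P y = θ₁ * qf P₁ y + θ₂ * qf P₂ y := by
      unfold qf
      rw [hPeq, Matrix.add_mulVec, dotProduct_add, Matrix.smul_mulVec,
        Matrix.smul_mulVec, dotProduct_smul, dotProduct_smul, smul_eq_mul, smul_eq_mul]
    have h' := hxy
    nlinarith [hxy, hyPy, hxdot, hPy]
  rw [hid]
  exact add_le_add (mul_le_mul_of_nonneg_left (dual_ineq h1 x₁ y) hθ₁)
    (mul_le_mul_of_nonneg_left (dual_ineq h2 x₂ y) hθ₂)


section CompQuad

variable {Q : Fin m → Matrix (Fin n) (Fin n) ℝ}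

lemma compQuad_eq (Q : Fin m → Matrix (Fin n) (Fin n) ℝ) (x : Fin n → ℝ) :
    compQuad Q x
      = sInf ((fun γ : Fin m → ℝ => qf (∑ j, γ j • Q j)⁻¹ x) '' stdSimplex ℝ (Fin m)) := rfl

lemma SS_nonempty (hm : 0 < m) (Q : Fin m → Matrix (Fin n) (Fin n) ℝ) (x : Fin n → ℝ) :
    ((fun γ : Fin m → ℝ => qf (∑ j, γ j • Q j)⁻¹ x) '' stdSimplex ℝ (Fin m)).Nonempty :=
  ⟨_, ⟨Pi.single ⟨0, hm⟩ 1, single_mem_stdSimplex ℝ _, rfl⟩⟩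

lemma SS_nonneg (hQ : ∀ j, (Q j).PosDef) (x : Fin n → ℝ) :
    ∀ r ∈ (fun γ : Fin m → ℝ => qf (∑ j, γ j • Q j)⁻¹ x) '' stdSimplex ℝ (Fin m), 0 ≤ r := by
  rintro r ⟨γ, hγ, rfl⟩
  exact psd_qf_nonneg ((sum_smul_posDef hQ hγ).inv).posSemidef x

lemma SS_bddBelow (hQ : ∀ j, (Q j).PosDef) (x : Fin n → ℝ) :
    BddBelow ((fun γ : Fin m → ℝ => qf (∑ j, γ j • Q j)⁻¹ x) '' stdSimplex ℝ (Fin m)) :=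
  ⟨0, fun r hr => SS_nonneg hQ x r hr⟩

lemma compQuad_nonneg (hm : 0 < m) (hQ : ∀ j, (Q j).PosDef) (x : Fin n → ℝ) :
    0 ≤ compQuad Q x := by
  rw [compQuad_eq]
  exact le_csInf (SS_nonempty hm Q x) (SS_nonneg hQ x)

lemma compQuad_le (hQ : ∀ j, (Q j).PosDef) {γ : Fin m → ℝ} (hγ : γ ∈ stdSimplex ℝ (Fin m))
    (x : Fin n → ℝ) : compQuad Q x ≤ qf (∑ j, γ j • Q j)⁻¹ x := by
  rw [compQuad_eq]
  exact csInf_le (SS_bddBelow hQ x) ⟨γ, hγ, rfl⟩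

lemma compQuad_smul (Q : Fin m → Matrix (Fin n) (Fin n) ℝ) {c : ℝ} (hc : 0 ≤ c)
    (x : Fin n → ℝ) : compQuad Q (c • x) = c ^ 2 * compQuad Q x := by
  rw [compQuad_eq, compQuad_eq]
  have hset : (fun γ : Fin m → ℝ => qf (∑ j, γ j • Q j)⁻¹ (c • x)) '' stdSimplex ℝ (Fin m)
      = (c ^ 2) • ((fun γ : Fin m → ℝ => qf (∑ j, γ j • Q j)⁻¹ x) '' stdSimplex ℝ (Fin m)) := by
    rw [← Set.image_smul, Set.image_image]
    exact Set.image_congr fun γ _ => by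
      rw [qf_smul]; simp [smul_eq_mul]
  rw [hset, Real.sInf_smul_of_nonneg (by positivity), smul_eq_mul]

lemma compQuad_combo (hm : 0 < m) (hQ : ∀ j, (Q j).PosDef) {θ₁ θ₂ : ℝ}
    (hθ₁ : 0 ≤ θ₁) (hθ₂ : 0 ≤ θ₂) (hsum : θ₁ + θ₂ = 1) (x₁ x₂ : Fin n → ℝ) :
    compQuad Q (θ₁ • x₁ + θ₂ • x₂) ≤ θ₁ * compQuad Q x₁ + θ₂ * compQuad Q x₂ := by
  refine le_of_forall_pos_le_add fun δ hδ => ?_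
  obtain ⟨r₁, hr₁mem, hr₁⟩ := exists_lt_of_csInf_lt (SS_nonempty hm Q x₁)
    (lt_add_of_pos_right (compQuad Q x₁) hδ)
  obtain ⟨γ₁, hγ₁, rfl⟩ := hr₁mem
  obtain ⟨r₂, hr₂mem, hr₂⟩ := exists_lt_of_csInf_lt (SS_nonempty hm Q x₂)
    (lt_add_of_pos_right (compQuad Q x₂) hδ)
  obtain ⟨γ₂, hγ₂, rfl⟩ := hr₂mem
  set γ : Fin m → ℝ := fun j => θ₁ * γ₁ j + θ₂ * γ₂ j with hγdef
  have hγ : γ ∈ stdSimplex ℝ (Fin m) := by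
    constructor
    · intro j
      exact add_nonneg (mul_nonneg hθ₁ (hγ₁.1 j)) (mul_nonneg hθ₂ (hγ₂.1 j))
    · rw [Finset.sum_add_distrib, ← Finset.mul_sum, ← Finset.mul_sum, hγ₁.2, hγ₂.2,
        mul_one, mul_one, hsum]
  have hPeq : (∑ j, γ j • Q j) = θ₁ • (∑ j, γ₁ j • Q j) + θ₂ • (∑ j, γ₂ j • Q j) := by
    rw [Finset.smul_sum, Finset.smul_sum, ← Finset.sum_add_distrib]
    refine Finset.sum_congr rfl fun j _ => ?_
    rw [hγdef, add_smul, mul_smul, mul_smul]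
  have h1 := sum_smul_posDef hQ hγ₁
  have h2 := sum_smul_posDef hQ hγ₂
  have hP := sum_smul_posDef hQ hγ
  have step1 := compQuad_le hQ hγ (θ₁ • x₁ + θ₂ • x₂)
  have step2 := qf_inv_convex h1 h2 hP hθ₁ hθ₂ hPeq x₁ x₂
  have hδ' : θ₁ * δ + θ₂ * δ = δ := by rw [← add_mul, hsum, one_mul]
  have e1 : θ₁ * qf (∑ j, γ₁ j • Q j)⁻¹ x₁ ≤ θ₁ * (compQuad Q x₁ + δ) :=
    mul_le_mul_of_nonneg_left hr₁.le hθ₁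
  have e2 : θ₂ * qf (∑ j, γ₂ j • Q j)⁻¹ x₂ ≤ θ₂ * (compQuad Q x₂ + δ) :=
    mul_le_mul_of_nonneg_left hr₂.le hθ₂
  calc compQuad Q (θ₁ • x₁ + θ₂ • x₂) ≤ qf (∑ j, γ j • Q j)⁻¹ (θ₁ • x₁ + θ₂ • x₂) := step1
    _ ≤ θ₁ * qf (∑ j, γ₁ j • Q j)⁻¹ x₁ + θ₂ * qf (∑ j, γ₂ j • Q j)⁻¹ x₂ := step2
    _ ≤ θ₁ * (compQuad Q x₁ + δ) + θ₂ * (compQuad Q x₂ + δ) := add_le_add e1 e2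
    _ = θ₁ * compQuad Q x₁ + θ₂ * compQuad Q x₂ + δ := by linear_combination δ * hsum

end CompQuad


section CompNorm

variable {Q : Fin m → Matrix (Fin n) (Fin n) ℝ}

lemma compNorm_nonneg (Q : Fin m → Matrix (Fin n) (Fin n) ℝ) (x : Fin n → ℝ) :
    0 ≤ compNorm Q x := Real.sqrt_nonneg _

lemma compNorm_smul (Q : Fin m → Matrix (Fin n) (Fin n) ℝ) {c : ℝ} (hc : 0 ≤ c)
    (x : Fin n → ℝ) : compNorm Q (c • x) = c * compNorm Q x := by
  rw [compNorm, compNorm, compQuad_smul Q hc, Real.sqrt_mul (sq_nonneg c),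
    Real.sqrt_sq hc]

lemma sq_compNorm (hm : 0 < m) (hQ : ∀ j, (Q j).PosDef) (x : Fin n → ℝ) :
    compNorm Q x ^ 2 = compQuad Q x :=
  Real.sq_sqrt (compQuad_nonneg hm hQ x)

lemma compNorm_add_le (hm : 0 < m) (hQ : ∀ j, (Q j).PosDef) (a b : Fin n → ℝ) :
    compNorm Q (a + b) ≤ compNorm Q a + compNorm Q b := by
  have key : ∀ s r : ℝ, compNorm Q a < s → compNorm Q b < r →
      compNorm Q (a + b) ≤ s + r := by
    intro s r hs hr
    have hs0 : 0 < s := lt_of_le_of_lt (compNorm_nonneg Q a) hs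
    have hr0 : 0 < r := lt_of_le_of_lt (compNorm_nonneg Q b) hr
    have hA : compQuad Q a < s ^ 2 := by
      rw [← sq_compNorm hm hQ a]
      exact pow_lt_pow_left₀ hs (compNorm_nonneg Q a) two_ne_zero
    have hB : compQuad Q b < r ^ 2 := by
      rw [← sq_compNorm hm hQ b]
      exact pow_lt_pow_left₀ hr (compNorm_nonneg Q b) two_ne_zero
    set θ₁ : ℝ := s / (s + r) with hθ₁def
    set θ₂ : ℝ := r / (s + r) with hθ₂def
    have hsr : 0 < s + r := by linarith
    have hθ₁ : 0 < θ₁ := div_pos hs0 hsr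
    have hθ₂ : 0 < θ₂ := div_pos hr0 hsr
    have hsum : θ₁ + θ₂ = 1 := by
      rw [hθ₁def, hθ₂def, ← add_div, div_self hsr.ne']
    have hab : a + b = θ₁ • (θ₁⁻¹ • a) + θ₂ • (θ₂⁻¹ • b) := by
      rw [smul_smul, smul_smul, mul_inv_cancel₀ hθ₁.ne', mul_inv_cancel₀ hθ₂.ne',
        one_smul, one_smul]
    have hquad : compQuad Q (a + b) ≤ (s + r) ^ 2 := by
      calc compQuad Q (a + b)
          ≤ θ₁ * compQuad Q (θ₁⁻¹ • a) + θ₂ * compQuad Q (θ₂⁻¹ • b) := by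
            rw [hab]; exact compQuad_combo hm hQ hθ₁.le hθ₂.le hsum _ _
        _ = θ₁ * (θ₁⁻¹ ^ 2 * compQuad Q a) + θ₂ * (θ₂⁻¹ ^ 2 * compQuad Q b) := by
            rw [compQuad_smul Q (inv_nonneg.2 hθ₁.le), compQuad_smul Q (inv_nonneg.2 hθ₂.le)]
        _ = compQuad Q a / θ₁ + compQuad Q b / θ₂ := by
            field_simp
        _ ≤ s ^ 2 / θ₁ + r ^ 2 / θ₂ := by
            gcongr
        _ = (s + r) ^ 2 := by
            rw [hθ₁def, hθ₂def]
            field_simp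
    rw [compNorm]
    calc Real.sqrt (compQuad Q (a + b)) ≤ Real.sqrt ((s + r) ^ 2) :=
          Real.sqrt_le_sqrt hquad
      _ = s + r := Real.sqrt_sq hsr.le
  refine le_of_forall_pos_le_add fun δ hδ => ?_
  have h := key (compNorm Q a + δ / 2) (compNorm Q b + δ / 2)
    (lt_add_of_pos_right _ (by linarith)) (lt_add_of_pos_right _ (by linarith))
  linarith

lemma compNorm_convexOn (hm : 0 < m) (hQ : ∀ j, (Q j).PosDef) :
    ConvexOn ℝ (Set.univ : Set (Fin n → ℝ)) (compNorm Q) := by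
  refine ⟨convex_univ, fun a _ b _ θ₁ θ₂ hθ₁ hθ₂ hsum => ?_⟩
  calc compNorm Q (θ₁ • a + θ₂ • b)
      ≤ compNorm Q (θ₁ • a) + compNorm Q (θ₂ • b) := compNorm_add_le hm hQ _ _
    _ = θ₁ * compNorm Q a + θ₂ * compNorm Q b := by
        rw [compNorm_smul Q hθ₁, compNorm_smul Q hθ₂]
    _ = θ₁ • compNorm Q a + θ₂ • compNorm Q b := rfl

end CompNorm


section Decay

variable {Q : Fin m → Matrix (Fin n) (Fin n) ℝ} {α : ℝ} {A₀ : Matrix (Fin n) (Fin n) ℝ}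

lemma sum_smul_posSemidef {R : Fin m → Matrix (Fin n) (Fin n) ℝ}
    (hR : ∀ j, (R j).PosSemidef) {γ : Fin m → ℝ} (hγ0 : ∀ j, 0 ≤ γ j) :
    (∑ j, γ j • R j).PosSemidef := by
  have hherm : (∑ j, γ j • R j).IsHermitian := by
    have hj : ∀ j : Fin m, (γ j • R j).IsHermitian := fun j => by
      unfold Matrix.IsHermitian
      ext i k
      simp only [Matrix.conjTranspose_apply, Matrix.smul_apply, star_smul, star_trivial,
        smul_eq_mul]
      have := congrFun (congrFun (transpose_eq (hR j).isHermitian) k) i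
      simp only [Matrix.transpose_apply] at this
      rw [this]
    classical
    have key : ∀ s : Finset (Fin m), (∑ j ∈ s, γ j • R j).IsHermitian := by
      intro s
      induction s using Finset.induction_on with
      | empty => simp [Matrix.isHermitian_zero]
      | @insert a s ha ih => rw [Finset.sum_insert ha]; exact (hj a).add ih
    exact key Finset.univ
  refine .of_dotProduct_mulVec_nonneg hherm fun z => ?_
  have key : (z ⬝ᵥ (∑ j, γ j • R j) *ᵥ z) = ∑ j, γ j * qf (R j) z := qf_sum_smul R γ z
  rw [star_trivial, key]
  exact Finset.sum_nonneg fun j _ => mul_nonneg (hγ0 j) (psd_qf_nonneg (hR j) z)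

lemma lmi_inv (hQ : ∀ j, (Q j).PosDef)
    (hLMI : ∀ j : Fin m, (-(A₀ * Q j + Q j * A₀ᵀ + (2 * α) • Q j)).PosSemidef)
    {γ : Fin m → ℝ} (hγ : γ ∈ stdSimplex ℝ (Fin m)) :
    (-((∑ j, γ j • Q j)⁻¹ * A₀ + A₀ᵀ * (∑ j, γ j • Q j)⁻¹
      + (2 * α) • (∑ j, γ j • Q j)⁻¹)).PosSemidef := by
  set P : Matrix (Fin n) (Fin n) ℝ := ∑ j, γ j • Q j with hPdef
  have hP : P.PosDef := sum_smul_posDef hQ hγ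
  have hdet : IsUnit P.det := (Matrix.isUnit_iff_isUnit_det P).1 hP.isUnit
  have hPP : P * P⁻¹ = 1 := Matrix.mul_nonsing_inv P hdet
  have hPP' : P⁻¹ * P = 1 := Matrix.nonsing_inv_mul P hdet
  have hSeq : -(A₀ * P + P * A₀ᵀ + (2 * α) • P)
      = ∑ j, γ j • (-(A₀ * Q j + Q j * A₀ᵀ + (2 * α) • Q j)) := by
    rw [hPdef, Finset.mul_sum, Finset.sum_mul, Finset.smul_sum, ← Finset.sum_add_distrib,
      ← Finset.sum_add_distrib, ← Finset.sum_neg_distrib]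
    refine Finset.sum_congr rfl fun j _ => ?_
    rw [Matrix.mul_smul, Matrix.smul_mul, smul_comm ((2:ℝ) * α) (γ j), smul_neg, smul_add,
      smul_add]
  have hS : (-(A₀ * P + P * A₀ᵀ + (2 * α) • P)).PosSemidef := by
    rw [hSeq]
    exact sum_smul_posSemidef (fun j => hLMI j) hγ.1
  have hconj := hS.mul_mul_conjTranspose_same P⁻¹
  have hherm : (P⁻¹)ᴴ = P⁻¹ := hP.inv.isHermitian
  rw [hherm] at hconj
  have h1 : P⁻¹ * (A₀ * P) * P⁻¹ = P⁻¹ * A₀ := by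
    rw [← mul_assoc P⁻¹ A₀ P, mul_assoc (P⁻¹ * A₀) P P⁻¹, hPP, mul_one]
  have h2 : P⁻¹ * (P * A₀ᵀ) * P⁻¹ = A₀ᵀ * P⁻¹ := by
    rw [← mul_assoc P⁻¹ P A₀ᵀ, hPP', one_mul]
  have h3 : P⁻¹ * ((2 * α) • P) * P⁻¹ = (2 * α) • P⁻¹ := by
    rw [Matrix.mul_smul, Matrix.smul_mul, hPP', one_mul]
  have e : P⁻¹ * -(A₀ * P + P * A₀ᵀ + (2 * α) • P) * P⁻¹
      = -(P⁻¹ * A₀ + A₀ᵀ * P⁻¹ + (2 * α) • P⁻¹) := by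
    rw [mul_neg, neg_mul, Matrix.mul_add, Matrix.mul_add, Matrix.add_mul, Matrix.add_mul,
      h1, h2, h3]
  rw [e] at hconj
  exact hconj

lemma hasDerivAt_qf (M : Matrix (Fin n) (Fin n) ℝ) (ε : ℝ → Fin n → ℝ)
    (hder : ∀ s : ℝ, HasDerivAt ε (A₀ *ᵥ ε s) s) (t : ℝ) :
    HasDerivAt (fun s => qf M (ε s))
      ((A₀ *ᵥ ε t) ⬝ᵥ (M *ᵥ ε t) + ε t ⬝ᵥ (M *ᵥ (A₀ *ᵥ ε t))) t := by
  have hc : ∀ i, HasDerivAt (fun s => ε s i) ((A₀ *ᵥ ε t) i) t :=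
    fun i => hasDerivAt_pi.1 (hder t) i
  have hMv : ∀ i, HasDerivAt (fun s => (M *ᵥ ε s) i) ((M *ᵥ (A₀ *ᵥ ε t)) i) t := by
    intro i
    have h := HasDerivAt.fun_sum (fun k (_ : k ∈ Finset.univ) => (hc k).const_mul (M i k))
    have hfun : (fun s => ∑ k, M i k * ε s k) = fun s => (M *ᵥ ε s) i := by
      funext s
      simp [Matrix.mulVec, dotProduct]
    have hval : (∑ k, M i k * (A₀ *ᵥ ε t) k) = (M *ᵥ (A₀ *ᵥ ε t)) i := by
      simp [Matrix.mulVec, dotProduct]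
    rw [hfun, hval] at h
    exact h
  have h := HasDerivAt.fun_sum (fun i (_ : i ∈ Finset.univ) => (hc i).fun_mul (hMv i))
  have hfun : (fun s => ∑ i, ε s i * (M *ᵥ ε s) i) = fun s => qf M (ε s) := by
    funext s
    simp [qf, dotProduct]
  have hval : (∑ i, ((A₀ *ᵥ ε t) i * (M *ᵥ ε t) i + ε t i * (M *ᵥ (A₀ *ᵥ ε t)) i))
      = (A₀ *ᵥ ε t) ⬝ᵥ (M *ᵥ ε t) + ε t ⬝ᵥ (M *ᵥ (A₀ *ᵥ ε t)) := by
    rw [Finset.sum_add_distrib]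
    rfl
  rw [hfun, hval] at h
  exact h

lemma compQuad_decay (hm : 0 < m) (hQ : ∀ j, (Q j).PosDef)
    (hLMI : ∀ j : Fin m, (-(A₀ * Q j + Q j * A₀ᵀ + (2 * α) • Q j)).PosSemidef)
    (ε : ℝ → Fin n → ℝ) (hder : ∀ s : ℝ, HasDerivAt ε (A₀ *ᵥ ε s) s)
    {t : ℝ} (ht : 0 ≤ t) :
    compQuad Q (ε t) ≤ Real.exp (-(2 * α) * t) * compQuad Q (ε 0) := by
  have main : ∀ γ ∈ stdSimplex ℝ (Fin m),
      compQuad Q (ε t) ≤ Real.exp (-(2 * α) * t) * qf (∑ j, γ j • Q j)⁻¹ (ε 0) := by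
    intro γ hγ
    set P : Matrix (Fin n) (Fin n) ℝ := ∑ j, γ j • Q j with hPdef
    set M : Matrix (Fin n) (Fin n) ℝ := P⁻¹ with hMdef
    have hT := lmi_inv hQ hLMI hγ
    set W : ℝ → ℝ := fun s => qf M (ε s) with hWdef
    have hW : ∀ s : ℝ, HasDerivAt W
        ((A₀ *ᵥ ε s) ⬝ᵥ (M *ᵥ ε s) + ε s ⬝ᵥ (M *ᵥ (A₀ *ᵥ ε s))) s :=
      fun s => hasDerivAt_qf M ε hder s
    have hbound : ∀ s : ℝ,
        (A₀ *ᵥ ε s) ⬝ᵥ (M *ᵥ ε s) + ε s ⬝ᵥ (M *ᵥ (A₀ *ᵥ ε s)) + (2 * α) * W s ≤ 0 := by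
      intro s
      have h0 := psd_qf_nonneg hT (ε s)
      have e0 : qf (-(M * A₀ + A₀ᵀ * M + (2 * α) • M)) (ε s)
          = -(qf (M * A₀) (ε s) + qf (A₀ᵀ * M) (ε s) + (2 * α) * qf M (ε s)) := by
        unfold qf
        rw [Matrix.neg_mulVec, dotProduct_neg, Matrix.add_mulVec, Matrix.add_mulVec,
          dotProduct_add, dotProduct_add, Matrix.smul_mulVec, dotProduct_smul,
          smul_eq_mul]
      have e1 : (A₀ *ᵥ ε s) ⬝ᵥ (M *ᵥ ε s) = qf (A₀ᵀ * M) (ε s) := by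
        rw [mulVec_dotProduct', Matrix.mulVec_mulVec]
        rfl
      have e2 : ε s ⬝ᵥ (M *ᵥ (A₀ *ᵥ ε s)) = qf (M * A₀) (ε s) := by
        rw [Matrix.mulVec_mulVec]
        rfl
      rw [e0] at h0
      rw [e1, e2, hWdef]
      linarith
    set g : ℝ → ℝ := fun s => Real.exp (2 * α * s) * W s with hgdef
    have hg : ∀ s : ℝ, HasDerivAt g
        (Real.exp (2 * α * s) * (2 * α) * W s
          + Real.exp (2 * α * s)
            * ((A₀ *ᵥ ε s) ⬝ᵥ (M *ᵥ ε s) + ε s ⬝ᵥ (M *ᵥ (A₀ *ᵥ ε s)))) s := by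
      intro s
      have hlin : HasDerivAt (fun u : ℝ => 2 * α * u) (2 * α) s := by
        simpa using (hasDerivAt_id s).const_mul (2 * α)
      have hexp := hlin.exp
      exact hexp.mul (hW s)
    have hganti : Antitone g := by
      refine antitone_of_deriv_nonpos (fun s => (hg s).differentiableAt) fun s => ?_
      rw [(hg s).deriv]
      have hb := hbound s
      have hE : (0:ℝ) ≤ Real.exp (2 * α * s) := (Real.exp_pos _).le
      nlinarith [mul_le_mul_of_nonneg_left hb hE]
    have hgt : g t ≤ g 0 := hganti ht
    have hg0 : g 0 = W 0 := by simp [hgdef]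
    have hWt : W t ≤ Real.exp (-(2 * α) * t) * W 0 := by
      have h2 := mul_le_mul_of_nonneg_left hgt (Real.exp_nonneg (-(2 * α) * t))
      rw [hgdef] at h2
      simp only at h2
      have : Real.exp (-(2 * α) * t) * (Real.exp (2 * α * t) * W t) = W t := by
        rw [← mul_assoc, ← Real.exp_add]
        norm_num
      rw [this] at h2
      simpa using h2
    calc compQuad Q (ε t) ≤ qf P⁻¹ (ε t) := compQuad_le hQ hγ (ε t)
      _ = W t := rfl
      _ ≤ Real.exp (-(2 * α) * t) * W 0 := hWt
      _ = Real.exp (-(2 * α) * t) * qf (∑ j, γ j • Q j)⁻¹ (ε 0) := rfl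
  have hrw : (fun γ : Fin m → ℝ => Real.exp (-(2 * α) * t) * qf (∑ j, γ j • Q j)⁻¹ (ε 0))
        '' stdSimplex ℝ (Fin m)
      = Real.exp (-(2 * α) * t)
        • ((fun γ : Fin m → ℝ => qf (∑ j, γ j • Q j)⁻¹ (ε 0)) '' stdSimplex ℝ (Fin m)) := by
    rw [← Set.image_smul, Set.image_image]
    rfl
  have : compQuad Q (ε t) ≤ sInf ((fun γ : Fin m → ℝ =>
      Real.exp (-(2 * α) * t) * qf (∑ j, γ j • Q j)⁻¹ (ε 0)) '' stdSimplex ℝ (Fin m)) := by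
    refine le_csInf ⟨_, ⟨Pi.single ⟨0, hm⟩ 1, single_mem_stdSimplex ℝ _, rfl⟩⟩ ?_
    rintro b ⟨γ, hγ, rfl⟩
    exact main γ hγ
  rw [hrw, Real.sInf_smul_of_nonneg (Real.exp_nonneg _), smul_eq_mul, ← compQuad_eq] at this
  exact this

lemma compNorm_decay (hm : 0 < m) (hQ : ∀ j, (Q j).PosDef)
    (hLMI : ∀ j : Fin m, (-(A₀ * Q j + Q j * A₀ᵀ + (2 * α) • Q j)).PosSemidef)
    (ε : ℝ → Fin n → ℝ) (hder : ∀ s : ℝ, HasDerivAt ε (A₀ *ᵥ ε s) s)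
    {t : ℝ} (ht : 0 ≤ t) :
    compNorm Q (ε t) ≤ Real.exp (-α * t) * compNorm Q (ε 0) := by
  have h := compQuad_decay hm hQ hLMI ε hder ht
  have hs := Real.sqrt_le_sqrt h
  rw [compNorm, compNorm]
  refine hs.trans_eq ?_
  rw [Real.sqrt_mul (Real.exp_nonneg _)]
  congr 1
  rw [← Real.exp_half]
  congr 1
  ring

end Decay

end BarrierAux

/-- Theorem 2: if the estimation error `ε = x - x̂` obeys `ε' = A₀ ε` with
`A₀ Q_j + Q_j A₀ᵀ + 2α Q_j ⪯ 0` for all `j`, and the estimate `x̂(t)` lies in the convex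
hull of the vertices `v_i(t)`, then for every `t ≥ 0` there is a vertex `i` with
`‖x(t)‖_c ≤ ‖v_i(t)‖_c + e^{-αt} ‖x(0) - x̂(0)‖_c`. -/
theorem barrier_bound_comp (m n N : ℕ) (hm : 0 < m) (hN : 0 < N)
    (Q : Fin m → Matrix (Fin n) (Fin n) ℝ) (hQ : ∀ j, (Q j).PosDef)
    (α : ℝ) (hα : 0 < α)
    (A₀ : Matrix (Fin n) (Fin n) ℝ)
    (hLMI : ∀ j : Fin m, (-(A₀ * Q j + Q j * A₀ᵀ + (2 * α) • Q j)).PosSemidef)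
    (x xhat : ℝ → (Fin n → ℝ))
    (hx : Differentiable ℝ x) (hxhat : Differentiable ℝ xhat)
    (hε : ∀ t : ℝ, HasDerivAt (fun s => x s - xhat s) (A₀.mulVec (x t - xhat t)) t)
    (v : Fin N → ℝ → (Fin n → ℝ))
    (hhull : ∀ t : ℝ, 0 ≤ t → xhat t ∈ convexHull ℝ (Set.range fun i => v i t)) :
    ∀ t : ℝ, 0 ≤ t → ∃ i : Fin N,
      compNorm Q (x t) ≤ compNorm Q (v i t) +
        Real.exp (-α * t) * compNorm Q (x 0 - xhat 0) := by
  intro t ht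
  obtain ⟨y, hy, hle⟩ := (BarrierAux.compNorm_convexOn hm hQ).exists_ge_of_mem_convexHull
    (Set.subset_univ _) (hhull t ht)
  obtain ⟨i, rfl⟩ := hy
  refine ⟨i, ?_⟩
  have hdecay := BarrierAux.compNorm_decay hm hQ hLMI (fun s => x s - xhat s) hε ht
  have htri : compNorm Q (x t) ≤ compNorm Q (xhat t) + compNorm Q (x t - xhat t) := by
    have h := BarrierAux.compNorm_add_le hm hQ (xhat t) (x t - xhat t)
    simpa using h
  calc compNorm Q (x t) ≤ compNorm Q (xhat t) + compNorm Q (x t - xhat t) := htri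
    _ ≤ compNorm Q (v i t) + Real.exp (-α * t) * compNorm Q (x 0 - xhat 0) :=
        add_le_add hle hdecay
end

section
/- Let A₀ be a real n×n matrix all of whose (complex) eigenvalues have strictly negative real part. Let f : ℝ → (Fin n → ℝ) be continuous and let x, x̂ : ℝ → (Fin n → ℝ) be differentiable functions satisfying x'(t) = A₀ x(t) + f(t) and x̂'(t) = A₀ x̂(t) + f(t) for all t. Then x(t) − x̂(t) = exp(t A₀) (x(0) − x̂(0)) for all t, and there exist constants C ≥ 0 and β > 0 such that ‖x(t) − x̂(t)‖ ≤ C e^{−βt} ‖x(0) − x̂(0)‖ for all t ≥ 0; in particular x(t) − x̂(t) converges to 0 exponentially. -/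
open Matrix

/-- The Euclidean norm on `Fin n → ℝ`. -/
noncomputable def euclNorm {n : ℕ} (v : Fin n → ℝ) : ℝ :=
  Real.sqrt (∑ i, v i ^ 2)

open NormedSpace

variable {n : ℕ}

/-- mulVec by a fixed vector, as a linear map in the matrix. -/
noncomputable def mulVecL (w : Fin n → ℂ) :
    Matrix (Fin n) (Fin n) ℂ →ₗ[ℂ] (Fin n → ℂ) where
  toFun M := M.mulVec w
  map_add' M N := Matrix.add_mulVec M N w
  map_smul' c M := Matrix.smul_mulVec c M w

lemma exp_mulVec_eq (B : Matrix (Fin n) (Fin n) ℂ) (μ : ℂ) (w : Fin n → ℂ)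
    (hw : ((B - μ • 1) ^ n).mulVec w = 0) (t : ℝ) :
    (exp ((t : ℂ) • B)).mulVec w =
      Complex.exp ((t : ℂ) * μ) •
        ∑ k ∈ Finset.range n, ((t : ℂ) ^ k * (k.factorial : ℂ)⁻¹) •
          ((B - μ • 1) ^ k).mulVec w := by
  letI : SeminormedRing (Matrix (Fin n) (Fin n) ℂ) := Matrix.linftyOpSemiNormedRing
  letI : NormedRing (Matrix (Fin n) (Fin n) ℂ) := Matrix.linftyOpNormedRing
  letI : NormedAlgebra ℂ (Matrix (Fin n) (Fin n) ℂ) := Matrix.linftyOpNormedAlgebra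
  have hsplit : (t : ℂ) • B = ((t : ℂ) * μ) • (1 : Matrix (Fin n) (Fin n) ℂ)
      + (t : ℂ) • (B - μ • 1) := by
    rw [smul_sub, smul_smul]; abel
  have hcomm : Commute (((t : ℂ) * μ) • (1 : Matrix (Fin n) (Fin n) ℂ))
      ((t : ℂ) • (B - μ • 1)) := ((Commute.one_left _).smul_left _).smul_right _
  rw [hsplit, Matrix.exp_add_of_commute _ _ hcomm]
  have h1 : exp (((t : ℂ) * μ) • (1 : Matrix (Fin n) (Fin n) ℂ))
      = Complex.exp ((t : ℂ) * μ) • (1 : Matrix (Fin n) (Fin n) ℂ) := by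
    have hd : ∀ c : ℂ, c • (1 : Matrix (Fin n) (Fin n) ℂ)
        = Matrix.diagonal (fun _ => c) := by
      intro c
      ext i j
      by_cases h : i = j <;> simp [h, Matrix.one_apply, Matrix.diagonal_apply]
    rw [hd, Matrix.exp_diagonal, hd]
    congr 1
    rw [Pi.exp_def]
    funext i
    simp [Complex.exp_eq_exp_ℂ]
  rw [h1, smul_mul_assoc, one_mul, Matrix.smul_mulVec]
  congr 1
  -- now compute exp of the (locally) nilpotent part applied to w
  have hsum : Summable fun k : ℕ =>
      ((k.factorial : ℂ)⁻¹) • ((t : ℂ) • (B - μ • 1)) ^ k :=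
    expSeries_summable' ((t : ℂ) • (B - μ • 1))
  have happ : (exp ((t : ℂ) • (B - μ • 1))).mulVec w
      = ∑' k : ℕ, (mulVecL w) (((k.factorial : ℂ)⁻¹) • ((t : ℂ) • (B - μ • 1)) ^ k) := by
    rw [exp_eq_tsum ℂ]
    exact ((mulVecL w).toContinuousLinearMap.map_tsum hsum)
  rw [happ]
  have hterm : ∀ k : ℕ, (mulVecL w) (((k.factorial : ℂ)⁻¹) • ((t : ℂ) • (B - μ • 1)) ^ k)
      = ((t : ℂ) ^ k * (k.factorial : ℂ)⁻¹) • ((B - μ • 1) ^ k).mulVec w := by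
    intro k
    simp only [mulVecL, LinearMap.coe_mk, AddHom.coe_mk, smul_pow, smul_smul,
      Matrix.smul_mulVec]
    rw [mul_comm]
  have hzero : ∀ k ∉ Finset.range n,
      (mulVecL w) (((k.factorial : ℂ)⁻¹) • ((t : ℂ) • (B - μ • 1)) ^ k) = 0 := by
    intro k hk
    rw [hterm k]
    rw [Finset.mem_range, not_lt] at hk
    have : (B - μ • 1) ^ k = (B - μ • 1) ^ (k - n) * (B - μ • 1) ^ n := by
      rw [← pow_add]; congr 1; omega
    rw [this, ← Matrix.mulVec_mulVec, hw, Matrix.mulVec_zero, smul_zero]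
  rw [tsum_eq_sum hzero]
  exact Finset.sum_congr rfl fun k _ => hterm k

lemma pow_le_exp_aux {γ : ℝ} (hγ : 0 < γ) {t : ℝ} (ht : 0 ≤ t) (k : ℕ) :
    t ^ k ≤ (k.factorial : ℝ) * γ⁻¹ ^ k * Real.exp (γ * t) := by
  have h := Real.pow_div_factorial_le_exp (x := γ * t) (mul_nonneg hγ.le ht) k
  have h2 : (γ * t) ^ k ≤ (k.factorial : ℝ) * Real.exp (γ * t) := by
    rw [div_le_iff₀ (by positivity)] at h
    linarith [h]
  calc t ^ k = (γ * t) ^ k * γ⁻¹ ^ k := by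
        rw [mul_pow, mul_comm ((γ:ℝ)^k) (t^k), mul_assoc, ← mul_pow,
          mul_inv_cancel₀ hγ.ne', one_pow, mul_one]
    _ ≤ ((k.factorial : ℝ) * Real.exp (γ * t)) * γ⁻¹ ^ k := by
        exact mul_le_mul_of_nonneg_right h2 (by positivity)
    _ = (k.factorial : ℝ) * γ⁻¹ ^ k * Real.exp (γ * t) := by ring

/-- Decay estimate for a single generalized eigenvector. -/
lemma gen_eigenvec_decay (B : Matrix (Fin n) (Fin n) ℂ) (μ : ℂ) (w : Fin n → ℂ)
    (hw : ((B - μ • 1) ^ n).mulVec w = 0) {β : ℝ} (hβpos : 0 < β) (hβ : β < -μ.re) :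
    ∃ C : ℝ, 0 ≤ C ∧ ∀ t : ℝ, 0 ≤ t →
      ‖(exp ((t : ℂ) • B)).mulVec w‖ ≤ C * Real.exp (-β * t) := by
  set γ : ℝ := -μ.re - β with hγdef
  have hγ : 0 < γ := by simp [hγdef]; linarith
  refine ⟨∑ k ∈ Finset.range n, γ⁻¹ ^ k * ‖((B - μ • 1) ^ k).mulVec w‖,
    Finset.sum_nonneg fun k _ => by positivity, fun t ht => ?_⟩
  rw [exp_mulVec_eq B μ w hw t, norm_smul]
  have h1 : ‖Complex.exp ((t : ℂ) * μ)‖ = Real.exp (t * μ.re) := by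
    rw [Complex.norm_exp]
    congr 1
    simp
  rw [h1]
  calc Real.exp (t * μ.re) * ‖∑ k ∈ Finset.range n, ((t : ℂ) ^ k * (k.factorial : ℂ)⁻¹) •
          ((B - μ • 1) ^ k).mulVec w‖
      ≤ Real.exp (t * μ.re) * ∑ k ∈ Finset.range n,
          t ^ k * (k.factorial : ℝ)⁻¹ * ‖((B - μ • 1) ^ k).mulVec w‖ := by
        refine mul_le_mul_of_nonneg_left ?_ (Real.exp_nonneg _)
        refine (norm_sum_le _ _).trans ?_
        refine Finset.sum_le_sum fun k _ => ?_
        rw [norm_smul]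
        apply mul_le_mul_of_nonneg_right _ (norm_nonneg _)
        rw [norm_mul, norm_pow]
        simp [Complex.norm_real, abs_of_nonneg ht]
    _ ≤ ∑ k ∈ Finset.range n,
          γ⁻¹ ^ k * ‖((B - μ • 1) ^ k).mulVec w‖ * Real.exp (-β * t) := by
        rw [Finset.mul_sum]
        refine Finset.sum_le_sum fun k _ => ?_
        have hpow := pow_le_exp_aux hγ ht k
        have hfac : (0:ℝ) < (k.factorial : ℝ) := by positivity
        have key : Real.exp (t * μ.re) * (t ^ k * (k.factorial : ℝ)⁻¹)
            ≤ γ⁻¹ ^ k * Real.exp (-β * t) := by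
          have h3 : t ^ k * (k.factorial : ℝ)⁻¹ ≤ γ⁻¹ ^ k * Real.exp (γ * t) := by
            rw [mul_inv_le_iff₀ hfac]
            calc t ^ k ≤ (k.factorial : ℝ) * γ⁻¹ ^ k * Real.exp (γ * t) := hpow
              _ = γ⁻¹ ^ k * Real.exp (γ * t) * (k.factorial : ℝ) := by ring
          calc Real.exp (t * μ.re) * (t ^ k * (k.factorial : ℝ)⁻¹)
              ≤ Real.exp (t * μ.re) * (γ⁻¹ ^ k * Real.exp (γ * t)) :=
                mul_le_mul_of_nonneg_left h3 (Real.exp_nonneg _)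
            _ = γ⁻¹ ^ k * (Real.exp (t * μ.re) * Real.exp (γ * t)) := by ring
            _ = γ⁻¹ ^ k * Real.exp (-β * t) := by
                rw [← Real.exp_add]
                congr 1
                rw [hγdef]
                ring
        calc Real.exp (t * μ.re) * (t ^ k * (k.factorial : ℝ)⁻¹ * ‖((B - μ • 1) ^ k).mulVec w‖)
            = (Real.exp (t * μ.re) * (t ^ k * (k.factorial : ℝ)⁻¹)) * ‖((B - μ • 1) ^ k).mulVec w‖ := by
              ring
          _ ≤ (γ⁻¹ ^ k * Real.exp (-β * t)) * ‖((B - μ • 1) ^ k).mulVec w‖ :=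
              mul_le_mul_of_nonneg_right key (norm_nonneg _)
          _ = γ⁻¹ ^ k * ‖((B - μ • 1) ^ k).mulVec w‖ * Real.exp (-β * t) := by ring
    _ = (∑ k ∈ Finset.range n, γ⁻¹ ^ k * ‖((B - μ • 1) ^ k).mulVec w‖) * Real.exp (-β * t) := by
        rw [Finset.sum_mul]

lemma exp_mulVec_decay (B : Matrix (Fin n) (Fin n) ℂ)
    (hB : ∀ μ ∈ spectrum ℂ B, μ.re < 0) (v : Fin n → ℂ) :
    ∃ β : ℝ, 0 < β ∧ ∃ C : ℝ, 0 ≤ C ∧ ∀ t : ℝ, 0 ≤ t →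
      ‖(exp ((t : ℂ) • B)).mulVec v‖ ≤ C * Real.exp (-β * t) := by
  classical
  set L : Module.End ℂ (Fin n → ℂ) := Matrix.toLinAlgEquiv' B with hL
  have htop := Module.End.iSup_maxGenEigenspace_eq_top L
  have hv : v ∈ ⨆ μ : ℂ, L.maxGenEigenspace μ := by rw [htop]; trivial
  rw [Submodule.mem_iSup_iff_exists_finsupp] at hv
  obtain ⟨d, hd, hsum⟩ := hv
  -- nilpotency at matrix level
  have hnil : ∀ μ : ℂ, ((B - μ • 1) ^ n).mulVec (d μ) = 0 := by
    intro μ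
    have h1 := hd μ
    rw [Module.End.maxGenEigenspace_eq_genEigenspace_finrank,
      Module.End.mem_genEigenspace_nat] at h1
    have hfr : Module.finrank ℂ (Fin n → ℂ) = n := Module.finrank_fin_fun ℂ
    rw [hfr] at h1
    have h2 : (L - μ • 1) ^ n = Matrix.toLinAlgEquiv' ((B - μ • 1) ^ n) := by
      rw [map_pow, map_sub, _root_.map_smul, _root_.map_one]
    rw [h2, LinearMap.mem_ker, Matrix.toLinAlgEquiv'_apply] at h1
    exact h1
  -- eigenvalues in the support have negative real part
  have hneg : ∀ μ ∈ d.support, μ.re < 0 := by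
    intro μ hμ
    have hne : d μ ≠ 0 := Finsupp.mem_support_iff.mp hμ
    have hmem : d μ ∈ L.maxGenEigenspace μ := hd μ
    have hbot : L.maxGenEigenspace μ ≠ ⊥ :=
      Submodule.ne_bot_iff _ |>.mpr ⟨d μ, hmem, hne⟩
    have hev : L.HasEigenvalue μ := by
      refine Module.End.hasEigenvalue_of_hasGenEigenvalue
        (k := Module.finrank ℂ (Fin n → ℂ)) ?_
      rw [Module.End.hasGenEigenvalue_iff,
        ← Module.End.maxGenEigenspace_eq_genEigenspace_finrank]
      exact hbot
    have hspec : μ ∈ spectrum ℂ L := hev.mem_spectrum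
    rw [hL, AlgEquiv.spectrum_eq] at hspec
    exact hB μ hspec
  by_cases hs : d.support.Nonempty
  · set β : ℝ := (d.support.inf' hs fun μ => -μ.re) / 2 with hβdef
    have hβle : ∀ μ ∈ d.support, β ≤ (-μ.re) / 2 := fun μ hμ => by
      have := Finset.inf'_le (fun μ => -μ.re) hμ
      rw [hβdef]
      linarith
    have hβpos : 0 < β := by
      obtain ⟨μ₀, hμ₀, hval⟩ := Finset.exists_mem_eq_inf' hs fun μ => -μ.re
      rw [hβdef, hval]
      have := hneg μ₀ hμ₀
      linarith
    have hβlt : ∀ μ ∈ d.support, β < -μ.re := fun μ hμ => by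
      have h1 := hβle μ hμ
      have h2 := hneg μ hμ
      linarith
    have hCs : ∀ μ ∈ d.support, ∃ C : ℝ, 0 ≤ C ∧ ∀ t : ℝ, 0 ≤ t →
        ‖(exp ((t : ℂ) • B)).mulVec (d μ)‖ ≤ C * Real.exp (-β * t) :=
      fun μ hμ => gen_eigenvec_decay B μ (d μ) (hnil μ) hβpos (hβlt μ hμ)
    choose! C hC0 hC using hCs
    refine ⟨β, hβpos, ∑ μ ∈ d.support, C μ,
      Finset.sum_nonneg fun μ hμ => hC0 μ hμ, fun t ht => ?_⟩
    have hvsum : v = ∑ μ ∈ d.support, d μ := by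
      rw [← hsum]; rfl
    have hexp : (exp ((t : ℂ) • B)).mulVec v
        = ∑ μ ∈ d.support, (exp ((t : ℂ) • B)).mulVec (d μ) := by
      rw [hvsum, ← Matrix.mulVecLin_apply, map_sum]
      simp [Matrix.mulVecLin_apply]
    rw [hexp]
    calc ‖∑ μ ∈ d.support, (exp ((t : ℂ) • B)).mulVec (d μ)‖
        ≤ ∑ μ ∈ d.support, ‖(exp ((t : ℂ) • B)).mulVec (d μ)‖ := norm_sum_le _ _
      _ ≤ ∑ μ ∈ d.support, C μ * Real.exp (-β * t) :=
          Finset.sum_le_sum fun μ hμ => hC μ hμ t ht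
      _ = (∑ μ ∈ d.support, C μ) * Real.exp (-β * t) := by rw [Finset.sum_mul]
  · -- empty support: v = 0
    have hv0 : v = 0 := by
      rw [← hsum, Finsupp.sum, Finset.not_nonempty_iff_eq_empty.mp hs]
      simp
    exact ⟨1, one_pos, 0, le_refl 0, fun t ht => by
      simp [hv0, Matrix.mulVec_zero]⟩

section RealODE

variable (A₀ : Matrix (Fin n) (Fin n) ℝ)

lemma hasDerivAt_expSmul_mulVec (ε : ℝ → Fin n → ℝ) (ε' : Fin n → ℝ) (t : ℝ)
    (hε : HasDerivAt ε ε' t) :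
    HasDerivAt (fun s : ℝ => (exp ((-s) • A₀)).mulVec (ε s))
      ((-(A₀ * exp ((-t) • A₀))).mulVec (ε t) + (exp ((-t) • A₀)).mulVec ε') t := by
  letI : SeminormedRing (Matrix (Fin n) (Fin n) ℝ) := Matrix.linftyOpSemiNormedRing
  letI : NormedRing (Matrix (Fin n) (Fin n) ℝ) := Matrix.linftyOpNormedRing
  letI : NormedAlgebra ℝ (Matrix (Fin n) (Fin n) ℝ) := Matrix.linftyOpNormedAlgebra
  have hEneg : HasDerivAt (fun s : ℝ => exp ((-s) • A₀))
      (-(A₀ * exp ((-t) • A₀))) t := by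
    have h1 := hasDerivAt_exp_smul_const' (𝕂 := ℝ) A₀ (-t)
    have h2 : HasDerivAt (fun s : ℝ => -s) (-1 : ℝ) t := hasDerivAt_neg' t
    have h3 := HasDerivAt.scomp t h1 h2
    simp only [Function.comp_def, neg_one_smul] at h3
    with_unfolding_all exact h3
  -- entry maps
  have hentry : ∀ (i j : Fin n) (M : ℝ → Matrix (Fin n) (Fin n) ℝ)
      (M' : Matrix (Fin n) (Fin n) ℝ), HasDerivAt M M' t →
      HasDerivAt (fun s => M s i j) (M' i j) t := by
    intro i j M M' hM
    let eLM : Matrix (Fin n) (Fin n) ℝ →ₗ[ℝ] ℝ :=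
      { toFun := fun M => M i j
        map_add' := fun _ _ => rfl
        map_smul' := fun _ _ => rfl }
    have := (eLM.toContinuousLinearMap.hasFDerivAt (x := M t)).comp_hasDerivAt t hM
    exact this
  have hvj : ∀ j, HasDerivAt (fun s => ε s j) (ε' j) t := fun j => hasDerivAt_pi.mp hε j
  rw [hasDerivAt_pi]
  intro i
  have hsum : HasDerivAt (fun s => ∑ j, (exp ((-s) • A₀)) i j * ε s j)
      (∑ j, ((-(A₀ * exp ((-t) • A₀))) i j * ε t j + (exp ((-t) • A₀)) i j * ε' j)) t := by
    refine HasDerivAt.fun_sum fun j _ => ?_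
    have hm := hentry i j _ _ hEneg
    exact hm.mul (hvj j)
  convert hsum using 1
  · with_unfolding_all rfl
  · with_unfolding_all rfl
  · funext s
    with_unfolding_all rfl
  · simp only [Pi.add_apply, Matrix.mulVec, dotProduct, Finset.sum_add_distrib]

lemma solution_eq (ε : ℝ → Fin n → ℝ)
    (hε : ∀ t : ℝ, HasDerivAt ε (A₀.mulVec (ε t)) t) (t : ℝ) :
    ε t = (exp (t • A₀)).mulVec (ε 0) := by
  letI : SeminormedRing (Matrix (Fin n) (Fin n) ℝ) := Matrix.linftyOpSemiNormedRing
  letI : NormedRing (Matrix (Fin n) (Fin n) ℝ) := Matrix.linftyOpNormedRing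
  letI : NormedAlgebra ℝ (Matrix (Fin n) (Fin n) ℝ) := Matrix.linftyOpNormedAlgebra
  set g : ℝ → Fin n → ℝ := fun s => (exp ((-s) • A₀)).mulVec (ε s) with hgdef
  have hg : ∀ s : ℝ, HasDerivAt g 0 s := by
    intro s
    have h := hasDerivAt_expSmul_mulVec A₀ ε (A₀.mulVec (ε s)) s (hε s)
    have hcomm : A₀ * exp ((-s) • A₀) = exp ((-s) • A₀) * A₀ := by
      have : Commute A₀ ((-s) • A₀) := (Commute.refl A₀).smul_right _
      exact this.exp_right.eq
    have hzero : (-(A₀ * exp ((-s) • A₀))).mulVec (ε s)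
        + (exp ((-s) • A₀)).mulVec (A₀.mulVec (ε s)) = 0 := by
      rw [hcomm, Matrix.neg_mulVec, Matrix.mulVec_mulVec]
      simp
    have h' := h
    rw [hzero] at h'
    exact h'
  have hconst : g t = g 0 :=
    is_const_of_deriv_eq_zero (fun s => (hg s).differentiableAt) (fun s => (hg s).deriv) t 0
  have hg0 : g 0 = ε 0 := by
    rw [hgdef]
    simp [NormedSpace.exp_zero, Matrix.one_mulVec]
  have hinv : exp (t • A₀) * exp (-(t • A₀)) = 1 := by
    rw [← Matrix.exp_add_of_commute (t • A₀) (-(t • A₀)) ((Commute.refl (t • A₀)).neg_right)]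
    rw [add_neg_cancel, NormedSpace.exp_zero]
  have := congrArg (fun w => (exp (t • A₀)).mulVec w) (hconst.trans hg0)
  simpa [hgdef, Matrix.mulVec_mulVec, hinv, Matrix.one_mulVec, neg_smul] using this

end RealODE

lemma exp_map_complex (A₀ : Matrix (Fin n) (Fin n) ℝ) (t : ℝ) :
    (exp (t • A₀)).map (Complex.ofReal : ℝ → ℂ)
      = exp ((t : ℂ) • A₀.map (Complex.ofReal : ℝ → ℂ)) := by
  letI : SeminormedRing (Matrix (Fin n) (Fin n) ℝ) := Matrix.linftyOpSemiNormedRing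
  letI : NormedRing (Matrix (Fin n) (Fin n) ℝ) := Matrix.linftyOpNormedRing
  letI : NormedAlgebra ℝ (Matrix (Fin n) (Fin n) ℝ) := Matrix.linftyOpNormedAlgebra
  letI : NormedAlgebra ℚ (Matrix (Fin n) (Fin n) ℝ) := Matrix.linftyOpNormedAlgebra
  letI : SeminormedRing (Matrix (Fin n) (Fin n) ℂ) := Matrix.linftyOpSemiNormedRing
  letI : NormedRing (Matrix (Fin n) (Fin n) ℂ) := Matrix.linftyOpNormedRing
  letI : NormedAlgebra ℝ (Matrix (Fin n) (Fin n) ℂ) := Matrix.linftyOpNormedAlgebra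
  letI : NormedAlgebra ℂ (Matrix (Fin n) (Fin n) ℂ) := Matrix.linftyOpNormedAlgebra
  have hcont : Continuous fun M : Matrix (Fin n) (Fin n) ℝ =>
      (Complex.ofRealHom.mapMatrix : Matrix (Fin n) (Fin n) ℝ →+* Matrix (Fin n) (Fin n) ℂ) M := by
    exact continuous_id.matrix_map (X := Matrix (Fin n) (Fin n) ℝ)
      (A := id) Complex.continuous_ofReal
  have h1 := map_exp (Complex.ofRealHom.mapMatrix : Matrix (Fin n) (Fin n) ℝ →+* Matrix (Fin n) (Fin n) ℂ) hcont (t • A₀)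
  have h2 : (Complex.ofRealHom.mapMatrix : Matrix (Fin n) (Fin n) ℝ →+* Matrix (Fin n) (Fin n) ℂ) (t • A₀)
      = (t : ℂ) • A₀.map (Complex.ofReal : ℝ → ℂ) := by
    ext i j
    simp [RingHom.mapMatrix_apply, Matrix.map_apply, Matrix.smul_apply, Complex.real_smul]
  calc (exp (t • A₀)).map (Complex.ofReal : ℝ → ℂ)
      = (Complex.ofRealHom.mapMatrix : Matrix (Fin n) (Fin n) ℝ →+* Matrix (Fin n) (Fin n) ℂ) (exp (t • A₀)) := rfl
    _ = exp ((Complex.ofRealHom.mapMatrix : Matrix (Fin n) (Fin n) ℝ →+* Matrix (Fin n) (Fin n) ℂ) (t • A₀)) := by with_unfolding_all exact h1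
    _ = exp ((t : ℂ) • A₀.map (Complex.ofReal : ℝ → ℂ)) := by rw [h2]

lemma euclNorm_le_sqrt_mul (v : Fin n → ℝ) : euclNorm v ≤ Real.sqrt n * ‖v‖ := by
  have h1 : ∑ i, v i ^ 2 ≤ (n : ℝ) * ‖v‖ ^ 2 := by
    calc ∑ i, v i ^ 2 ≤ ∑ _i : Fin n, ‖v‖ ^ 2 := by
          refine Finset.sum_le_sum fun i _ => ?_
          have h := norm_le_pi_norm v i
          have h2 : |v i| ≤ ‖v‖ := by simpa using h
          calc v i ^ 2 = |v i| ^ 2 := (sq_abs _).symm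
            _ ≤ ‖v‖ ^ 2 := by
              apply pow_le_pow_left₀ (abs_nonneg _) h2
      _ = (n : ℝ) * ‖v‖ ^ 2 := by simp [Finset.sum_const, nsmul_eq_mul]
  calc euclNorm v = Real.sqrt (∑ i, v i ^ 2) := rfl
    _ ≤ Real.sqrt ((n : ℝ) * ‖v‖ ^ 2) := Real.sqrt_le_sqrt h1
    _ = Real.sqrt n * ‖v‖ := by
        rw [Real.sqrt_mul (Nat.cast_nonneg n), Real.sqrt_sq (norm_nonneg v)]

lemma euclNorm_pos {v : Fin n → ℝ} (hv : v ≠ 0) : 0 < euclNorm v := by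
  have : ∃ i, v i ≠ 0 := by
    by_contra h
    push_neg at h
    exact hv (funext h)
  obtain ⟨i, hi⟩ := this
  have : 0 < ∑ j, v j ^ 2 :=
    Finset.sum_pos' (fun j _ => sq_nonneg _) ⟨i, Finset.mem_univ i, by positivity⟩
  exact Real.sqrt_pos.mpr this

lemma pi_norm_le_complex (v : Fin n → ℝ) : ‖v‖ ≤ ‖fun i => (v i : ℂ)‖ := by
  refine (pi_norm_le_iff_of_nonneg (norm_nonneg _)).mpr fun i => ?_
  have h1 : ‖v i‖ = ‖((v i : ℂ))‖ := by simp
  rw [h1]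
  exact norm_le_pi_norm (fun i => ((v i : ℂ))) i

/-- if `A₀` is Hurwitz (every complex eigenvalue has negative real part) and
`x`, `x̂` solve the same affine ODE `x' = A₀ x + f`, then
`x(t) - x̂(t) = e^{tA₀}(x(0) - x̂(0))` and the error decays exponentially. -/
theorem estimation_error_exponential_decay (n : ℕ)
    (A₀ : Matrix (Fin n) (Fin n) ℝ)
    (hHurwitz : ∀ μ ∈ spectrum ℂ (A₀.map (Complex.ofReal : ℝ → ℂ)), μ.re < 0)
    (f : ℝ → (Fin n → ℝ)) (hf : Continuous f)
    (x xhat : ℝ → (Fin n → ℝ))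
    (hx : ∀ t : ℝ, HasDerivAt x (A₀.mulVec (x t) + f t) t)
    (hxhat : ∀ t : ℝ, HasDerivAt xhat (A₀.mulVec (xhat t) + f t) t) :
    (∀ t : ℝ, x t - xhat t = (NormedSpace.exp (t • A₀)).mulVec (x 0 - xhat 0)) ∧
    ∃ C : ℝ, 0 ≤ C ∧ ∃ β : ℝ, 0 < β ∧ ∀ t : ℝ, 0 ≤ t →
      euclNorm (x t - xhat t) ≤ C * Real.exp (-β * t) * euclNorm (x 0 - xhat 0) := by
  classical
  set ε : ℝ → Fin n → ℝ := fun t => x t - xhat t with hεdef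
  have hεd : ∀ t : ℝ, HasDerivAt ε (A₀.mulVec (ε t)) t := by
    intro t
    have h := (hx t).sub (hxhat t)
    have heq : (A₀.mulVec (x t) + f t) - (A₀.mulVec (xhat t) + f t)
        = A₀.mulVec (ε t) := by
      rw [hεdef]
      simp only
      rw [Matrix.mulVec_sub]
      abel
    rw [heq] at h
    exact h
  have part1 : ∀ t : ℝ, ε t = (exp (t • A₀)).mulVec (ε 0) := solution_eq A₀ ε hεd
  refine ⟨part1, ?_⟩
  set B : Matrix (Fin n) (Fin n) ℂ := A₀.map (Complex.ofReal : ℝ → ℂ) with hBdef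
  set vc : Fin n → ℂ := fun i => ((ε 0 i : ℝ) : ℂ) with hvcdef
  obtain ⟨β, hβpos, C', hC'0, hC'⟩ := exp_mulVec_decay B hHurwitz vc
  -- complexification of the solution formula
  have hbridge : ∀ t : ℝ, (fun i => ((ε t i : ℝ) : ℂ)) = (exp ((t : ℂ) • B)).mulVec vc := by
    intro t
    funext i
    rw [part1 t]
    have h1 := RingHom.map_mulVec Complex.ofRealHom (exp (t • A₀)) (ε 0) i
    simp only [Complex.ofRealHom_eq_coe] at h1
    rw [h1]
    rw [← exp_map_complex A₀ t]
    rfl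
  by_cases h0 : ε 0 = 0
  · refine ⟨0, le_refl 0, 1, one_pos, fun t ht => ?_⟩
    have h2 : ε t = 0 := by rw [part1 t, h0, Matrix.mulVec_zero]
    show euclNorm (ε t) ≤ 0 * Real.exp (-1 * t) * euclNorm (ε 0)
    rw [h2]
    simp [euclNorm]
  · have he0 : 0 < euclNorm (ε 0) := euclNorm_pos h0
    refine ⟨Real.sqrt n * C' / euclNorm (ε 0), by positivity, β, hβpos, fun t ht => ?_⟩
    have hstep : euclNorm (ε t) ≤ Real.sqrt n * C' * Real.exp (-β * t) := by
      calc euclNorm (ε t) ≤ Real.sqrt n * ‖ε t‖ := euclNorm_le_sqrt_mul (ε t)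
        _ ≤ Real.sqrt n * ‖fun i => ((ε t i : ℝ) : ℂ)‖ :=
            mul_le_mul_of_nonneg_left (pi_norm_le_complex (ε t)) (Real.sqrt_nonneg _)
        _ = Real.sqrt n * ‖(exp ((t : ℂ) • B)).mulVec vc‖ := by rw [hbridge t]
        _ ≤ Real.sqrt n * (C' * Real.exp (-β * t)) :=
            mul_le_mul_of_nonneg_left (hC' t ht) (Real.sqrt_nonneg _)
        _ = Real.sqrt n * C' * Real.exp (-β * t) := by ring
    have : Real.sqrt n * C' / euclNorm (ε 0) * Real.exp (-β * t) * euclNorm (ε 0)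
        = Real.sqrt n * C' * Real.exp (-β * t) := by
      field_simp
    show euclNorm (ε t) ≤ Real.sqrt n * C' / euclNorm (ε 0) * Real.exp (-β * t) * euclNorm (ε 0)
    rw [this]
    exact hstep
end

section
/- Let Q_1, …, Q_m be positive definite real n×n matrices, let α₀ > 0, and let A_1, …, A_N be real n×n matrices such that A_i Q_j + Q_j A_iᵀ + 2α₀ Q_j is negative semidefinite for every i and every j. Let A : ℝ → Matrix (Fin n) (Fin n) ℝ with A(t) in the convex hull of {A_1, …, A_N} for every t, and let x : ℝ → (Fin n → ℝ) be differentiable with x'(t) = A(t) x(t). Then ‖x(t)‖_c ≤ e^{−α₀ t} ‖x(0)‖_c for all t ≥ 0; in particular, if ‖x(0)‖_c ≤ 1 then ‖x(t)‖_c ≤ 1 for all t ≥ 0, so the composite unit ball Ω_c = {x : ‖x‖_c ≤ 1} is forward invariant for the polytopic linear differential inclusion. -/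
open Matrix

variable {n : ℕ}

lemma quad_add (M M' : Matrix (Fin n) (Fin n) ℝ) (y : Fin n → ℝ) :
    y ⬝ᵥ (M + M').mulVec y = y ⬝ᵥ M.mulVec y + y ⬝ᵥ M'.mulVec y := by
  simp [Matrix.add_mulVec, dotProduct_add]

lemma quad_smul (c : ℝ) (M : Matrix (Fin n) (Fin n) ℝ) (y : Fin n → ℝ) :
    y ⬝ᵥ (c • M).mulVec y = c * (y ⬝ᵥ M.mulVec y) := by
  simp [Matrix.smul_mulVec, dotProduct_smul]

lemma quad_sum {m : ℕ} (M : Fin m → Matrix (Fin n) (Fin n) ℝ) (y : Fin n → ℝ) :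
    y ⬝ᵥ (∑ j, M j).mulVec y = ∑ j, y ⬝ᵥ (M j).mulVec y := by
  induction (Finset.univ : Finset (Fin m)) using Finset.induction with
  | empty => simp
  | insert a s h ih => simp [Finset.sum_insert h, quad_add, ih]

lemma dot_shift (M : Matrix (Fin n) (Fin n) ℝ) (u w : Fin n → ℝ) :
    u ⬝ᵥ M.mulVec w = Mᵀ.mulVec u ⬝ᵥ w := by
  rw [Matrix.dotProduct_mulVec, Matrix.mulVec_transpose]

lemma Qgamma_posDef {m : ℕ} (hm : 0 < m) (Q : Fin m → Matrix (Fin n) (Fin n) ℝ)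
    (hQ : ∀ j, (Q j).PosDef) {γ : Fin m → ℝ} (hγ : γ ∈ stdSimplex ℝ (Fin m)) :
    (∑ j, γ j • Q j).PosDef := by
  obtain ⟨hγ0, hγ1⟩ := hγ
  rw [posDef_iff_dotProduct_mulVec]
  constructor
  · unfold Matrix.IsHermitian
    rw [conjTranspose_sum]
    congr 1; ext j
    rw [conjTranspose_smul]
    rw [(hQ j).isHermitian]
    simp
  · intro z hz
    simp only [star_trivial]
    have hterm : ∀ j, 0 ≤ γ j * (z ⬝ᵥ (Q j).mulVec z) := fun j => by
      have := (hQ j).posSemidef.dotProduct_mulVec_nonneg z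
      simp only [star_trivial] at this
      exact mul_nonneg (hγ0 j) this
    have hsum : z ⬝ᵥ (∑ j, γ j • Q j).mulVec z
        = ∑ j, γ j * (z ⬝ᵥ (Q j).mulVec z) := by
      rw [quad_sum]
      simp [quad_smul]
    rw [hsum]
    have hex : ∃ j, 0 < γ j := by
      by_contra h
      push_neg at h
      have : ∑ j, γ j = 0 := le_antisymm (Finset.sum_nonpos fun j _ => h j)
        (Finset.sum_nonneg fun j _ => hγ0 j)
      rw [hγ1] at this; norm_num at this
    obtain ⟨j0, hj0⟩ := hex
    have hq := (hQ j0).dotProduct_mulVec_pos hz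
    simp only [star_trivial] at hq
    have hpos : 0 < γ j0 * (z ⬝ᵥ (Q j0).mulVec z) := mul_pos hj0 hq
    calc (0:ℝ) < γ j0 * (z ⬝ᵥ (Q j0).mulVec z) := hpos
      _ ≤ ∑ j, γ j * (z ⬝ᵥ (Q j).mulVec z) :=
        Finset.single_le_sum (fun j _ => hterm j) (Finset.mem_univ j0)

lemma quad_neg (M : Matrix (Fin n) (Fin n) ℝ) (y : Fin n → ℝ) :
    y ⬝ᵥ (-M).mulVec y = -(y ⬝ᵥ M.mulVec y) := by
  simp [Matrix.neg_mulVec, dotProduct_neg]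

lemma quad_lmi_hull {m N : ℕ} (Q : Fin m → Matrix (Fin n) (Fin n) ℝ)
    (α₀ : ℝ) (As : Fin N → Matrix (Fin n) (Fin n) ℝ)
    (hLMI : ∀ (i : Fin N) (j : Fin m),
      (-(As i * Q j + Q j * (As i)ᵀ + (2 * α₀) • Q j)).PosSemidef)
    {γ : Fin m → ℝ} (hγ : γ ∈ stdSimplex ℝ (Fin m))
    {B : Matrix (Fin n) (Fin n) ℝ} (hB : B ∈ convexHull ℝ (Set.range As))
    (y : Fin n → ℝ) :
    y ⬝ᵥ (B * (∑ j, γ j • Q j) + (∑ j, γ j • Q j) * Bᵀ).mulVec y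
      ≤ -(2*α₀) * (y ⬝ᵥ (∑ j, γ j • Q j).mulVec y) := by
  set Qγ := ∑ j, γ j • Q j with hQγ
  set S : Set (Matrix (Fin n) (Fin n) ℝ) :=
    {M | ∀ z : Fin n → ℝ, z ⬝ᵥ (M * Qγ + Qγ * Mᵀ).mulVec z
      ≤ -(2*α₀) * (z ⬝ᵥ Qγ.mulVec z)} with hS
  have hrange : Set.range As ⊆ S := by
    rintro _ ⟨i, rfl⟩ z
    have hexp : As i * Qγ + Qγ * (As i)ᵀ
        = ∑ j, γ j • (As i * Q j + Q j * (As i)ᵀ) := by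
      rw [hQγ, Matrix.mul_sum, Matrix.sum_mul, ← Finset.sum_add_distrib]
      congr 1; ext j
      rw [mul_smul_comm, smul_mul_assoc, smul_add]
    have hQγq : z ⬝ᵥ Qγ.mulVec z = ∑ j, γ j * (z ⬝ᵥ (Q j).mulVec z) := by
      rw [hQγ, quad_sum]; simp [quad_smul]
    rw [hexp, quad_sum, hQγq, Finset.mul_sum]
    apply Finset.sum_le_sum
    intro j _
    rw [quad_smul]
    have h0 := (hLMI i j).dotProduct_mulVec_nonneg z
    simp only [star_trivial] at h0
    rw [quad_neg, quad_add, quad_smul] at h0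
    have hj : z ⬝ᵥ (As i * Q j + Q j * (As i)ᵀ).mulVec z
        ≤ -(2*α₀) * (z ⬝ᵥ (Q j).mulVec z) := by linarith
    calc γ j * (z ⬝ᵥ (As i * Q j + Q j * (As i)ᵀ).mulVec z)
        ≤ γ j * (-(2*α₀) * (z ⬝ᵥ (Q j).mulVec z)) :=
          mul_le_mul_of_nonneg_left hj (hγ.1 j)
      _ = -(2*α₀) * (γ j * (z ⬝ᵥ (Q j).mulVec z)) := by ring
  have hconv : Convex ℝ S := by
    intro M1 h1 M2 h2 a b ha hb hab
    intro z
    have hexp : (a • M1 + b • M2) * Qγ + Qγ * (a • M1 + b • M2)ᵀ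
        = a • (M1 * Qγ + Qγ * M1ᵀ) + b • (M2 * Qγ + Qγ * M2ᵀ) := by
      rw [Matrix.transpose_add, Matrix.transpose_smul, Matrix.transpose_smul,
        Matrix.add_mul, Matrix.mul_add, smul_mul_assoc, smul_mul_assoc,
        mul_smul_comm, mul_smul_comm, smul_add, smul_add]
      abel
    rw [hexp, quad_add, quad_smul, quad_smul]
    have e1 := mul_le_mul_of_nonneg_left (h1 z) ha
    have e2 := mul_le_mul_of_nonneg_left (h2 z) hb
    have e3 : a * (-(2*α₀) * (z ⬝ᵥ Qγ.mulVec z)) + b * (-(2*α₀) * (z ⬝ᵥ Qγ.mulVec z))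
        = -(2*α₀) * (z ⬝ᵥ Qγ.mulVec z) := by
      rw [← add_mul, hab]; ring
    linarith
  exact convexHull_min hrange hconv hB y

lemma quad_decay_s17 (P : Matrix (Fin n) (Fin n) ℝ) (c : ℝ)
    (x v : ℝ → Fin n → ℝ)
    (hx : ∀ t, HasDerivAt x (v t) t)
    (hineq : ∀ t, v t ⬝ᵥ P.mulVec (x t) + x t ⬝ᵥ P.mulVec (v t)
        ≤ -c * (x t ⬝ᵥ P.mulVec (x t))) :
    ∀ t, 0 ≤ t →
      x t ⬝ᵥ P.mulVec (x t) ≤ Real.exp (-c * t) * (x 0 ⬝ᵥ P.mulVec (x 0)) := by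
  set f : ℝ → ℝ := fun s => x s ⬝ᵥ P.mulVec (x s) with hfdef
  have hxi : ∀ t i, HasDerivAt (fun s => x s i) (v t i) t :=
    fun t i => hasDerivAt_pi.1 (hx t) i
  have hf : ∀ t, HasDerivAt f
      (v t ⬝ᵥ P.mulVec (x t) + x t ⬝ᵥ P.mulVec (v t)) t := by
    intro t
    have h1 : HasDerivAt (fun s => ∑ i, x s i * ∑ j, P i j * x s j)
        (∑ i, (v t i * ∑ j, P i j * x t j + x t i * ∑ j, P i j * v t j)) t := by
      apply HasDerivAt.fun_sum
      intro i _
      exact (hxi t i).mul (HasDerivAt.fun_sum fun j _ => (hxi t j).const_mul (P i j))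
    have hfun : f = fun s => ∑ i, x s i * ∑ j, P i j * x s j := by
      funext s; simp [hfdef, dotProduct, Matrix.mulVec]
    have hval : v t ⬝ᵥ P.mulVec (x t) + x t ⬝ᵥ P.mulVec (v t)
        = ∑ i, (v t i * ∑ j, P i j * x t j + x t i * ∑ j, P i j * v t j) := by
      simp [dotProduct, Matrix.mulVec, Finset.sum_add_distrib]
    rw [hfun, hval]
    exact h1
  set g : ℝ → ℝ := fun s => Real.exp (c * s) * f s with hgdef
  have hg : ∀ t, HasDerivAt g
      (Real.exp (c * t) * c * f t
        + Real.exp (c * t) * (v t ⬝ᵥ P.mulVec (x t) + x t ⬝ᵥ P.mulVec (v t))) t := by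
    intro t
    have he : HasDerivAt (fun s => Real.exp (c * s)) (Real.exp (c * t) * c) t := by
      simpa using ((hasDerivAt_id t).const_mul c).exp
    exact he.mul (hf t)
  have hanti : Antitone g := by
    apply antitone_of_deriv_nonpos
    · exact fun t => (hg t).differentiableAt
    · intro t
      rw [(hg t).deriv]
      have h1 := hineq t
      have h2 : Real.exp (c * t) * (v t ⬝ᵥ P.mulVec (x t) + x t ⬝ᵥ P.mulVec (v t))
          ≤ Real.exp (c * t) * (-c * f t) :=
        mul_le_mul_of_nonneg_left h1 (Real.exp_pos _).le
      nlinarith [h2]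
  intro t ht
  have h2 : Real.exp (c * t) * f t ≤ f 0 := by
    have := hanti ht
    simpa [hgdef] using this
  calc f t = Real.exp (-c * t) * (Real.exp (c * t) * f t) := by
        rw [← mul_assoc, ← Real.exp_add]; simp
    _ ≤ Real.exp (-c * t) * f 0 :=
        mul_le_mul_of_nonneg_left h2 (Real.exp_pos _).le

/-- if all vertex matrices of a polytopic linear differential inclusion satisfy
`A_i Q_j + Q_j A_iᵀ + 2α₀ Q_j ⪯ 0` for all `j`, then along any trajectory `x' = A(t) x` with
`A(t) ∈ Co{A_1, …, A_N}` we have `‖x(t)‖_c ≤ e^{-α₀ t} ‖x(0)‖_c`; in particular the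
composite unit ball is forward invariant. -/
theorem pldi_comp_invariance (m n N : ℕ) (hm : 0 < m) (hN : 0 < N)
    (Q : Fin m → Matrix (Fin n) (Fin n) ℝ) (hQ : ∀ j, (Q j).PosDef)
    (α₀ : ℝ) (hα₀ : 0 < α₀)
    (As : Fin N → Matrix (Fin n) (Fin n) ℝ)
    (hLMI : ∀ (i : Fin N) (j : Fin m),
      (-(As i * Q j + Q j * (As i)ᵀ + (2 * α₀) • Q j)).PosSemidef)
    (A : ℝ → Matrix (Fin n) (Fin n) ℝ)
    (hA : ∀ t : ℝ, A t ∈ convexHull ℝ (Set.range As))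
    (x : ℝ → (Fin n → ℝ))
    (hx : ∀ t : ℝ, HasDerivAt x ((A t).mulVec (x t)) t) :
    (∀ t : ℝ, 0 ≤ t → compNorm Q (x t) ≤ Real.exp (-α₀ * t) * compNorm Q (x 0)) ∧
    (compNorm Q (x 0) ≤ 1 → ∀ t : ℝ, 0 ≤ t → compNorm Q (x t) ≤ 1) := by
  -- the key pointwise decay for each fixed γ in the simplex
  have key : ∀ γ ∈ stdSimplex ℝ (Fin m), ∀ t : ℝ, 0 ≤ t →
      x t ⬝ᵥ ((∑ j, γ j • Q j)⁻¹).mulVec (x t)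
        ≤ Real.exp (-(2*α₀) * t) * (x 0 ⬝ᵥ ((∑ j, γ j • Q j)⁻¹).mulVec (x 0)) := by
    intro γ hγ
    set Qγ := ∑ j, γ j • Q j with hQγdef
    have hQγ : Qγ.PosDef := Qgamma_posDef hm Q hQ hγ
    set P := Qγ⁻¹ with hPdef
    have hP : P.PosDef := hQγ.inv
    have hdet : IsUnit Qγ.det := hQγ.det_pos.ne'.isUnit
    have hQγP : Qγ * P = 1 := Matrix.mul_nonsing_inv _ hdet
    have hPQγ : P * Qγ = 1 := Matrix.nonsing_inv_mul _ hdet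
    have hQγT : Qγᵀ = Qγ := by
      have h := hQγ.isHermitian
      ext i j
      simpa [Matrix.conjTranspose_apply] using congrFun (congrFun h i) j
    have hPT : Pᵀ = P := by
      rw [hPdef, Matrix.transpose_nonsing_inv, hQγT]
    set v : ℝ → Fin n → ℝ := fun t => (A t).mulVec (x t) with hvdef
    have hineq : ∀ t, v t ⬝ᵥ P.mulVec (x t) + x t ⬝ᵥ P.mulVec (v t)
        ≤ -(2*α₀) * (x t ⬝ᵥ P.mulVec (x t)) := by
      intro t
      set y : Fin n → ℝ := P.mulVec (x t) with hydef
      have hmain := quad_lmi_hull Q α₀ As hLMI hγ (hA t) y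
      have hQy : Qγ.mulVec y = x t := by
        rw [hydef, Matrix.mulVec_mulVec, hQγP, Matrix.one_mulVec]
      have E1 : y ⬝ᵥ Qγ.mulVec y = x t ⬝ᵥ P.mulVec (x t) := by
        rw [hQy, dotProduct_comm]
      have E2 : y ⬝ᵥ ((A t) * Qγ).mulVec y = v t ⬝ᵥ P.mulVec (x t) := by
        rw [← Matrix.mulVec_mulVec, hQy, dotProduct_comm]
      have E3 : y ⬝ᵥ (Qγ * (A t)ᵀ).mulVec y = x t ⬝ᵥ P.mulVec (v t) := by
        rw [dot_shift, Matrix.transpose_mul, Matrix.transpose_transpose, hQγT,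
          ← Matrix.mulVec_mulVec, hQy]
        rw [dot_shift (M := P) (u := x t) (w := v t), hPT]
        exact dotProduct_comm _ _
      rw [quad_add, E1, E2, E3] at hmain
      exact hmain
    exact quad_decay_s17 P (2*α₀) x v hx hineq
  -- basic facts about compQuad
  set img : (Fin n → ℝ) → Set ℝ :=
    fun z => (fun γ : Fin m → ℝ => z ⬝ᵥ ((∑ j, γ j • Q j)⁻¹).mulVec z) ''
      stdSimplex ℝ (Fin m) with himg
  have hmem0 : ∀ s ∈ Set.Ici (0:ℝ), True := fun _ _ => trivial
  have hlb : ∀ z, ∀ s ∈ img z, (0:ℝ) ≤ s := by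
    rintro z s ⟨γ, hγ, rfl⟩
    have hpsd := ((Qgamma_posDef hm Q hQ hγ).inv).posSemidef.dotProduct_mulVec_nonneg z
    simpa using hpsd
  have hbdd : ∀ z, BddBelow (img z) := fun z => ⟨0, fun s hs => hlb z s hs⟩
  have hne : ∀ z, (img z).Nonempty := by
    intro z
    refine ⟨_, ⟨fun _ => (m:ℝ)⁻¹, ⟨fun _ => by positivity, ?_⟩, rfl⟩⟩
    rw [Finset.sum_const, Finset.card_univ, Fintype.card_fin, nsmul_eq_mul]
    field_simp
  have hq0 : ∀ z, 0 ≤ compQuad Q z := fun z => le_csInf (hne z) (hlb z)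
  have hdecay : ∀ t : ℝ, 0 ≤ t →
      compQuad Q (x t) ≤ Real.exp (-(2*α₀) * t) * compQuad Q (x 0) := by
    intro t ht
    have hE : (0:ℝ) < Real.exp (-(2*α₀) * t) := Real.exp_pos _
    have h1 : compQuad Q (x t) / Real.exp (-(2*α₀) * t) ≤ sInf (img (x 0)) := by
      apply le_csInf (hne (x 0))
      rintro b ⟨γ, hγ, rfl⟩
      rw [div_le_iff₀ hE]
      calc compQuad Q (x t)
          ≤ x t ⬝ᵥ ((∑ j, γ j • Q j)⁻¹).mulVec (x t) :=
            csInf_le (hbdd (x t)) ⟨γ, hγ, rfl⟩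
        _ ≤ Real.exp (-(2*α₀) * t) * (x 0 ⬝ᵥ ((∑ j, γ j • Q j)⁻¹).mulVec (x 0)) :=
            key γ hγ t ht
        _ = (x 0 ⬝ᵥ ((∑ j, γ j • Q j)⁻¹).mulVec (x 0)) * Real.exp (-(2*α₀) * t) := by
            ring
    have h2 := (div_le_iff₀ hE).1 h1
    calc compQuad Q (x t) ≤ sInf (img (x 0)) * Real.exp (-(2*α₀) * t) := h2
      _ = Real.exp (-(2*α₀) * t) * compQuad Q (x 0) := by
          rw [mul_comm]; rfl
  have hsqrtE : ∀ t : ℝ, Real.sqrt (Real.exp (-(2*α₀) * t)) = Real.exp (-α₀ * t) := by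
    intro t
    rw [show -(2*α₀) * t = (-α₀*t) + (-α₀*t) by ring, Real.exp_add,
      Real.sqrt_mul_self (Real.exp_pos _).le]
  have main : ∀ t : ℝ, 0 ≤ t →
      compNorm Q (x t) ≤ Real.exp (-α₀ * t) * compNorm Q (x 0) := by
    intro t ht
    show Real.sqrt (compQuad Q (x t)) ≤ _
    calc Real.sqrt (compQuad Q (x t))
        ≤ Real.sqrt (Real.exp (-(2*α₀) * t) * compQuad Q (x 0)) :=
          Real.sqrt_le_sqrt (hdecay t ht)
      _ = Real.sqrt (Real.exp (-(2*α₀) * t)) * Real.sqrt (compQuad Q (x 0)) :=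
          Real.sqrt_mul (Real.exp_pos _).le _
      _ = Real.exp (-α₀ * t) * compNorm Q (x 0) := by rw [hsqrtE t]; rfl
  refine ⟨main, ?_⟩
  intro h0 t ht
  have h1 := main t ht
  have hexp1 : Real.exp (-α₀ * t) ≤ 1 := by
    rw [Real.exp_le_one_iff]
    nlinarith
  have hnn : 0 ≤ compNorm Q (x 0) := Real.sqrt_nonneg _
  calc compNorm Q (x t) ≤ Real.exp (-α₀ * t) * compNorm Q (x 0) := h1
    _ ≤ 1 * 1 := mul_le_mul hexp1 h0 hnn zero_le_one
    _ = 1 := one_mul 1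
end
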